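/- arXiv:1505.03270 — 14 statements merged into one kernel-verified Lean document; each statement's English description precedes it below -/
import Mathlib

section
/- Let G be a group with identity e, K a loop with identity ε, and for each σ ∈ K let ψ_σ : G → G be a bijection with ψ_σ(e) = e, and ψ_ε = Id. Then the multiplication (α,a)∘(β,b) = (αβ, ψ_β(a)·b) on K×G defines a loop with identity element (ε,e), and the subgroup Ḡ = {(ε,a) : a ∈ G} is right nuclear, i.e. Ḡ is contained in the right nucleus of this loop. -/
universe u v

/-- A loop: a type with a multiplication all of whose left and right translations
are bijective, together with a two-sided identity element. -/
class MLoop (L : Type u) extends Mul L, One L where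
  mul_left_bij : ∀ x : L, Function.Bijective fun y : L => x * y
  mul_right_bij : ∀ x : L, Function.Bijective fun y : L => y * x
  one_mul : ∀ x : L, 1 * x = x
  mul_one : ∀ x : L, x * 1 = x

instance (L : Type u) [MLoop L] : Nonempty L := ⟨1⟩

/-- Left division `x \ y = λ_x⁻¹ y`. -/
noncomputable def MLoop.ldiv {L : Type u} [MLoop L] (x y : L) : L :=
  Function.invFun (fun z : L => x * z) y

/-- Right division `x / y = ρ_y⁻¹ x`. -/
noncomputable def MLoop.rdiv {L : Type u} [MLoop L] (x y : L) : L :=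
  Function.invFun (fun z : L => z * y) x

/-- Middle inner mapping `T_x = ρ_x⁻¹ ∘ λ_x`, i.e. `T_x t` is the unique `z` with
`z * x = x * t`. -/
noncomputable def MLoop.midInner {L : Type u} [MLoop L] (x t : L) : L :=
  Function.invFun (fun z : L => z * x) (x * t)

/-- The left nucleus of a multiplicative structure. -/
def leftNucleus (L : Type u) [Mul L] : Set L :=
  {u : L | ∀ x y : L, u * x * y = u * (x * y)}

/-- The right nucleus of a multiplicative structure. -/
def rightNucleus (L : Type u) [Mul L] : Set L :=
  {u : L | ∀ x y : L, x * y * u = x * (y * u)}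

/-- The middle nucleus of a multiplicative structure. -/
def middleNucleus (L : Type u) [Mul L] : Set L :=
  {u : L | ∀ x y : L, x * u * y = x * (u * y)}

/-- A subset of a loop is a normal subloop if it is the kernel of a loop homomorphism. -/
def IsNormalSubloop {L : Type u} [MLoop L] (N : Set L) : Prop :=
  ∃ (M : Type u) (i : MLoop M) (f : L → M),
    (∀ x y : L, f (x * y) = i.toMul.mul (f x) (f y)) ∧ N = {x : L | f x = i.toOne.one}

/-- The data `(Θ, f)` of a Schreier extension of the group `G` by the loop `K`. -/
structure SchreierData (K : Type u) (G : Type v) [MLoop K] [Group G] where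
  Θ : K → G ≃* G
  f : K → K → G
  theta_one : Θ 1 = MulEquiv.refl G
  f_one_left : ∀ σ : K, f 1 σ = 1
  f_one_right : ∀ σ : K, f σ 1 = 1

/-- The multiplication of the Schreier loop `L(Θ,f)` on `K × G`:
`(τ,t)∘(σ,s) = (τσ, f(τ,σ)·Θ_σ(t)·s)`. -/
def SchreierData.mul {K : Type u} {G : Type v} [MLoop K] [Group G]
    (D : SchreierData K G) (p q : K × G) : K × G :=
  (p.1 * q.1, D.f p.1 q.1 * D.Θ q.1 p.2 * q.2)

/-- the multiplication `(α,a)∘(β,b) = (αβ, ψ_β(a)·b)` on `K × G` defines a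
loop with identity `(ε,e)`, and `Ḡ = {(ε,a) : a ∈ G}` is right nuclear. -/
theorem schreier_stmt0 {K G : Type u} [MLoop K] [Group G]
    (ψ : K → G → G)
    (hbij : ∀ σ : K, Function.Bijective (ψ σ))
    (hone : ∀ σ : K, ψ σ 1 = 1)
    (hid : ψ 1 = id) :
    let m : K × G → K × G → K × G := fun p q => (p.1 * q.1, ψ q.1 p.2 * q.2)
    (∀ p : K × G, m ((1 : K), (1 : G)) p = p) ∧
    (∀ p : K × G, m p ((1 : K), (1 : G)) = p) ∧
    (∀ p : K × G, Function.Bijective (m p)) ∧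
    (∀ p : K × G, Function.Bijective fun q : K × G => m q p) ∧
    (∀ a : G, ∀ x y : K × G, m (m x y) ((1 : K), a) = m x (m y ((1 : K), a))) := by
  intro m
  refine ⟨?_, ?_, ?_, ?_, ?_⟩
  · intro p
    simp only [m, MLoop.one_mul, hone, one_mul]
  · intro p
    simp only [m, MLoop.mul_one, hid, id, mul_one]
  · intro p
    constructor
    · intro q q' h
      simp only [m, Prod.mk.injEq] at h
      have h1 : q.1 = q'.1 := (MLoop.mul_left_bij p.1).1 h.1
      have h2 : q.2 = q'.2 := by
        have := h.2
        rw [h1] at this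
        exact mul_left_cancel this
      exact Prod.ext h1 h2
    · intro r
      obtain ⟨β, hβ⟩ := (MLoop.mul_left_bij p.1).2 r.1
      exact ⟨(β, (ψ β p.2)⁻¹ * r.2), by simp [m, hβ]⟩
  · intro p
    constructor
    · intro q q' h
      simp only [m, Prod.mk.injEq] at h
      have h1 : q.1 = q'.1 := (MLoop.mul_right_bij p.1).1 h.1
      have h2 : q.2 = q'.2 := (hbij p.1).1 (mul_right_cancel h.2)
      exact Prod.ext h1 h2
    · intro r
      obtain ⟨β, hβ⟩ := (MLoop.mul_right_bij p.1).2 r.1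
      obtain ⟨b, hb⟩ := (hbij p.1).2 (r.2 * p.2⁻¹)
      exact ⟨(β, b), by simp [m, hβ, hb]⟩
  · intro a x y
    simp only [m, MLoop.mul_one, hid, id, mul_assoc]
end

section
/- Let G be a group with identity e, K a loop with identity ε, and for each σ ∈ K let ψ_σ : G → G be a bijection with ψ_σ(e) = e, and ψ_ε = Id; equip K×G with the loop multiplication (α,a)∘(β,b) = (αβ, ψ_β(a)·b). Then the subgroup Ḡ = {(ε,a) : a ∈ G} is middle nuclear if and only if ψ_σ : G → G is an automorphism of G for every σ ∈ K. -/
universe u v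

/-- for the loop `(α,a)∘(β,b) = (αβ, ψ_β(a)·b)` on `K × G`, the subgroup
`Ḡ = {(ε,a) : a ∈ G}` is middle nuclear iff every `ψ_σ` is an automorphism of `G`. -/
theorem schreier_stmt1 {K G : Type u} [MLoop K] [Group G]
    (ψ : K → G → G)
    (hbij : ∀ σ : K, Function.Bijective (ψ σ))
    (hone : ∀ σ : K, ψ σ 1 = 1)
    (hid : ψ 1 = id) :
    let m : K × G → K × G → K × G := fun p q => (p.1 * q.1, ψ q.1 p.2 * q.2)
    (∀ a : G, ∀ x y : K × G, m (m x ((1 : K), a)) y = m x (m ((1 : K), a) y)) ↔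
      (∀ σ : K, ∀ a b : G, ψ σ (a * b) = ψ σ a * ψ σ b) := by
  intro m
  constructor
  · intro h σ a b
    have := h b (1, a) (σ, 1)
    simp [m, hid, hone, MLoop.one_mul, MLoop.mul_one] at this
    simpa [mul_comm] using this
  · intro h a x y
    simp [m, hid, h y.1, mul_assoc, MLoop.one_mul, MLoop.mul_one]
end

section
/- Let G be a group with identity e, K a loop with identity ε, and for each σ ∈ K let ψ_σ : G → G be a bijection with ψ_σ(e) = e, and ψ_ε = Id; equip K×G with the loop multiplication (α,a)∘(β,b) = (αβ, ψ_β(a)·b). Then the subgroup Ḡ = {(ε,a) : a ∈ G} is left nuclear if and only if ψ_β(ψ_α(x)·a) = ψ_{αβ}(x)·ψ_β(a) holds for all α, β ∈ K and all x, a ∈ G; in particular, if Ḡ is left nuclear then ψ_{αβ} = ψ_β ∘ ψ_α for all α, β ∈ K, i.e. σ ↦ ψ_σ is a homomorphism of K into the permutation group of G. -/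
universe u v

/-- for the loop `(α,a)∘(β,b) = (αβ, ψ_β(a)·b)` on `K × G`, the subgroup
`Ḡ = {(ε,a) : a ∈ G}` is left nuclear iff `ψ_β(ψ_α(x)·a) = ψ_{αβ}(x)·ψ_β(a)` for all
`α β x a`; in particular, if `Ḡ` is left nuclear then `ψ_{αβ} = ψ_β ∘ ψ_α`, i.e.
`σ ↦ ψ_σ` is a homomorphism of `K` into the permutation group of `G`. -/
theorem schreier_stmt2 {K G : Type u} [MLoop K] [Group G]
    (ψ : K → G → G)
    (hbij : ∀ σ : K, Function.Bijective (ψ σ))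
    (hone : ∀ σ : K, ψ σ 1 = 1)
    (hid : ψ 1 = id) :
    let m : K × G → K × G → K × G := fun p q => (p.1 * q.1, ψ q.1 p.2 * q.2)
    ((∀ a : G, ∀ x y : K × G, m (m ((1 : K), a) x) y = m ((1 : K), a) (m x y)) ↔
      (∀ α β : K, ∀ x a : G, ψ β (ψ α x * a) = ψ (α * β) x * ψ β a)) ∧
    ((∀ a : G, ∀ x y : K × G, m (m ((1 : K), a) x) y = m ((1 : K), a) (m x y)) →
      ∀ α β : K, ψ (α * β) = ψ β ∘ ψ α) := by
  intro m
  have key : (∀ a : G, ∀ x y : K × G, m (m ((1 : K), a) x) y = m ((1 : K), a) (m x y)) ↔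
      (∀ α β : K, ∀ x a : G, ψ β (ψ α x * a) = ψ (α * β) x * ψ β a) := by
    constructor
    · intro h α β x a
      have := h x (α, a) (β, 1)
      simp only [m, Prod.mk.injEq, one_mul, mul_one] at this
      simpa using this.2
    · intro h a x y
      simp only [m, Prod.mk.injEq]
      refine ⟨by rw [MLoop.one_mul, MLoop.one_mul], ?_⟩
      rw [h x.1 y.1 a x.2, mul_assoc]
  refine ⟨key, fun h α β => ?_⟩
  funext x
  have := key.mp h α β x 1
  simpa [hone] using this.symm
end

section
/- Let G be a group with identity e, K a loop with identity ε, Θ : K → Aut(G) a map with Θ_ε = Id, and f : K×K → G a function with f(ε,σ) = f(σ,ε) = e for all σ ∈ K. Then the multiplication (τ,t)∘(σ,s) = (τσ, f(τ,σ)·Θ_σ(t)·s), together with the divisions (ρ,r)/(σ,s) = (ρ/σ, Θ_σ^{-1}(f(ρ/σ,σ)^{-1}·r·s^{-1})) and (σ,s)\(ρ,r) = (σ\ρ, Θ_{σ\ρ}^{-1}(s)·f(σ,σ\ρ)^{-1}·r), defines a loop L(Θ,f) on K×G with identity (ε,e); moreover Ḡ = {(ε,t) : t ∈ G} is a normal subgroup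 of L(Θ,f), the map (ε,t) ↦ t : Ḡ → G is a group isomorphism, and the map τ ↦ (τ,e)Ḡ : K → L(Θ,f)/Ḡ is a loop isomorphism. -/
universe u v

theorem mul_ldiv' {L : Type u} [MLoop L] (x y : L) : x * MLoop.ldiv x y = y :=
  Function.rightInverse_invFun (MLoop.mul_left_bij x).2 y

theorem ldiv_mul' {L : Type u} [MLoop L] (x y : L) : MLoop.ldiv x (x * y) = y :=
  Function.leftInverse_invFun (MLoop.mul_left_bij x).1 y

theorem rdiv_mul' {L : Type u} [MLoop L] (x y : L) : MLoop.rdiv x y * y = x :=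
  Function.rightInverse_invFun (MLoop.mul_right_bij y).2 x

theorem mul_rdiv' {L : Type u} [MLoop L] (x y : L) : MLoop.rdiv (x * y) y = x :=
  Function.leftInverse_invFun (MLoop.mul_right_bij y).1 x

/-- the multiplication `(τ,t)∘(σ,s) = (τσ, f(τ,σ)·Θ_σ(t)·s)` together with
the stated left and right divisions defines a loop `L(Θ,f)` on `K × G` with identity
`(ε,e)`; `Ḡ = {(ε,t) : t ∈ G}` is a normal subgroup (it is the kernel of the surjective
loop homomorphism onto `K`), the map `(ε,t) ↦ t : Ḡ → G` is a group isomorphism, and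
`τ ↦ (τ,e)Ḡ` is a loop isomorphism of `K` onto the factor loop `L(Θ,f)/Ḡ` (it is a
bijection onto the set of left cosets of `Ḡ` which carries the product of representatives
to the corresponding coset). -/
theorem schreier_stmt3 {K G : Type u} [MLoop K] [Group G]
    (Θ : K → G ≃* G) (hΘ : Θ 1 = MulEquiv.refl G)
    (f : K → K → G) (hf1 : ∀ σ : K, f 1 σ = 1) (hf2 : ∀ σ : K, f σ 1 = 1) :
    let m : K × G → K × G → K × G :=
      fun p q => (p.1 * q.1, f p.1 q.1 * Θ q.1 p.2 * q.2)
    let ld : K × G → K × G → K × G := fun a b =>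
      (MLoop.ldiv a.1 b.1,
        (Θ (MLoop.ldiv a.1 b.1) a.2)⁻¹ * (f a.1 (MLoop.ldiv a.1 b.1))⁻¹ * b.2)
    let rd : K × G → K × G → K × G := fun a b =>
      (MLoop.rdiv a.1 b.1,
        (Θ b.1).symm ((f (MLoop.rdiv a.1 b.1) b.1)⁻¹ * a.2 * b.2⁻¹))
    let cosetOf : K × G → Set (K × G) := fun a => {q | ∃ t : G, q = m a ((1 : K), t)}
    -- `(ε,e)` is a two-sided identity
    (∀ p : K × G, m ((1 : K), (1 : G)) p = p) ∧
    (∀ p : K × G, m p ((1 : K), (1 : G)) = p) ∧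
    -- the divisions invert the translations, so the structure is a loop
    (∀ a b : K × G, m a (ld a b) = b) ∧
    (∀ a b : K × G, ld a (m a b) = b) ∧
    (∀ a b : K × G, m (rd a b) b = a) ∧
    (∀ a b : K × G, rd (m a b) b = a) ∧
    -- `Ḡ` is a normal subloop: the kernel of a surjective loop homomorphism onto `K`
    (∃ g : K × G → K, (∀ p q : K × G, g (m p q) = g p * g q) ∧ Function.Surjective g ∧
      {p : K × G | g p = 1} = {p : K × G | ∃ t : G, p = ((1 : K), t)}) ∧
    -- `(ε,t) ↦ t : Ḡ → G` is a group isomorphism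
    (∀ t s : G, m ((1 : K), t) ((1 : K), s) = ((1 : K), t * s)) ∧
    -- `τ ↦ (τ,e)Ḡ : K → L(Θ,f)/Ḡ` is a loop isomorphism
    Function.Injective (fun τ : K => cosetOf (τ, (1 : G))) ∧
    (∀ a : K × G, ∃ τ : K, cosetOf a = cosetOf (τ, (1 : G))) ∧
    (∀ σ τ : K, cosetOf (m (σ, (1 : G)) (τ, (1 : G))) = cosetOf (σ * τ, (1 : G))) := by
  intro m ld rd cosetOf
  have hcoset : ∀ a : K × G, cosetOf a = {q : K × G | q.1 = a.1} := by
    intro a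
    ext q
    simp only [cosetOf, m, Set.mem_setOf_eq, MLoop.mul_one, hΘ, MulEquiv.refl_apply, hf2,
      one_mul]
    constructor
    · rintro ⟨t, rfl⟩; rfl
    · intro h
      exact ⟨a.2⁻¹ * q.2, by rw [Prod.ext_iff]; simp [h.symm]⟩
  refine ⟨?_, ?_, ?_, ?_, ?_, ?_, ?_, ?_, ?_, ?_, ?_⟩
  · intro p
    simp [m, MLoop.one_mul, hf1]
  · intro p
    simp [m, MLoop.mul_one, hf2, hΘ]
  · intro a b
    simp only [m, ld, mul_ldiv']
    rw [Prod.ext_iff]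
    constructor
    · rfl
    · simp; group
  · intro a b
    simp only [m, ld, ldiv_mul']
    rw [Prod.ext_iff]
    constructor
    · rfl
    · simp; group
  · intro a b
    simp only [m, rd, rdiv_mul']
    rw [Prod.ext_iff]
    constructor
    · rfl
    · simp; group
  · intro a b
    simp only [m, rd, mul_rdiv']
    rw [Prod.ext_iff]
    constructor
    · rfl
    · simp; group
  · refine ⟨Prod.fst, fun p q => rfl, fun τ => ⟨(τ, 1), rfl⟩, ?_⟩
    ext p
    simp only [Set.mem_setOf_eq]
    constructor
    · intro h; exact ⟨p.2, by rw [Prod.ext_iff]; exact ⟨h, rfl⟩⟩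
    · rintro ⟨t, rfl⟩; rfl
  · intro t s
    simp [m, MLoop.one_mul, hf1, hΘ]
  · intro τ τ' h
    simp only [hcoset, Set.ext_iff] at h
    exact (h (τ, 1)).mp rfl
  · intro a
    exact ⟨a.1, by rw [hcoset, hcoset]⟩
  · intro σ τ
    rw [hcoset, hcoset]
end

section
/- For any Schreier loop L(Θ,f) defined on K×G, the normal subgroup Ḡ = {(ε,t) : t ∈ G} is middle and right nuclear, i.e. Ḡ is contained in both the middle nucleus and the right nucleus of L(Θ,f). -/
universe u v

/-- in any Schreier loop `L(Θ,f)` on `K × G`, the subgroup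
`Ḡ = {(ε,t) : t ∈ G}` is middle and right nuclear. -/
theorem schreier_stmt4 {K G : Type u} [MLoop K] [Group G]
    (Θ : K → G ≃* G) (hΘ : Θ 1 = MulEquiv.refl G)
    (f : K → K → G) (hf1 : ∀ σ : K, f 1 σ = 1) (hf2 : ∀ σ : K, f σ 1 = 1) :
    let m : K × G → K × G → K × G :=
      fun p q => (p.1 * q.1, f p.1 q.1 * Θ q.1 p.2 * q.2)
    ∀ t : G,
      (∀ x y : K × G, m (m x ((1 : K), t)) y = m x (m ((1 : K), t) y)) ∧
      (∀ x y : K × G, m (m x y) ((1 : K), t) = m x (m y ((1 : K), t))) := by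
  intro m t
  constructor <;> intro x y <;>
    simp [m, MLoop.mul_one, MLoop.one_mul, hf1, hf2, hΘ, mul_assoc, map_mul]
end

section
/- For a Schreier loop L(Θ,f) defined on K×G, the normal subgroup Ḡ = {(ε,t) : t ∈ G} is nuclear (i.e. contained in the intersection of the left, right and middle nuclei of L(Θ,f)) if and only if Θ_{στ} ∘ Θ_σ^{-1} ∘ Θ_τ^{-1} = ι_{f(σ,τ)} for all σ,τ ∈ K, where ι_s denotes the inner automorphism ι_s(t) = s·t·s^{-1} of G. -/
universe u v

/-- in a Schreier loop `L(Θ,f)` on `K × G`, the subgroup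
`Ḡ = {(ε,t) : t ∈ G}` is nuclear (contained in the left, middle and right nuclei)
iff `Θ_{στ} ∘ Θ_σ⁻¹ ∘ Θ_τ⁻¹ = ι_{f(σ,τ)}` for all `σ τ`. -/
theorem schreier_stmt5 {K G : Type u} [MLoop K] [Group G]
    (Θ : K → G ≃* G) (hΘ : Θ 1 = MulEquiv.refl G)
    (f : K → K → G) (hf1 : ∀ σ : K, f 1 σ = 1) (hf2 : ∀ σ : K, f σ 1 = 1) :
    let m : K × G → K × G → K × G :=
      fun p q => (p.1 * q.1, f p.1 q.1 * Θ q.1 p.2 * q.2)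
    (∀ t : G,
        (∀ x y : K × G, m (m ((1 : K), t) x) y = m ((1 : K), t) (m x y)) ∧
        (∀ x y : K × G, m (m x ((1 : K), t)) y = m x (m ((1 : K), t) y)) ∧
        (∀ x y : K × G, m (m x y) ((1 : K), t) = m x (m y ((1 : K), t)))) ↔
      (∀ σ τ : K, ∀ g : G,
        Θ (σ * τ) ((Θ σ).symm ((Θ τ).symm g)) = f σ τ * g * (f σ τ)⁻¹) := by
  intro m
  constructor
  · intro h σ τ g
    have H := (h ((Θ σ).symm ((Θ τ).symm g))).1 (σ, 1) (τ, 1)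
    simp only [m, Prod.mk.injEq, hf1, hf2, hΘ, MulEquiv.refl_apply, one_mul, mul_one,
      MLoop.one_mul, MLoop.mul_one, map_one, MulEquiv.apply_symm_apply] at H
    rw [eq_mul_inv_iff_mul_eq]
    exact H.2.symm
  · intro h t
    have key : ∀ σ τ : K, Θ (σ * τ) t * f σ τ = f σ τ * Θ τ (Θ σ t) := by
      intro σ τ
      have := h σ τ (Θ τ (Θ σ t))
      simp only [MulEquiv.symm_apply_apply] at this
      rw [this]
      group
    refine ⟨?_, ?_, ?_⟩ <;> intro x y <;>
      simp only [m, Prod.mk.injEq, hf1, hf2, hΘ, MulEquiv.refl_apply, one_mul, mul_one,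
        MLoop.one_mul, MLoop.mul_one, map_mul, true_and] <;>
      simp only [← mul_assoc]
    rw [← key]
end

section
/- Let L(Id,f) be an automorphism-free Schreier loop defined on K×G (i.e. Θ_σ = Id for all σ ∈ K). If there exist σ,τ ∈ K such that f(σ,τ) is not contained in the center of G, then the normal subgroup Ḡ = {(ε,t) : t ∈ G} is not left nuclear in L(Id,f). -/
universe u v

/-- in an automorphism-free Schreier loop `L(Id,f)` on `K × G`, if some
value `f(σ,τ)` is not central in `G` then `Ḡ = {(ε,t) : t ∈ G}` is not left nuclear. -/
theorem schreier_stmt6 {K G : Type u} [MLoop K] [Group G]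
    (f : K → K → G) (hf1 : ∀ σ : K, f 1 σ = 1) (hf2 : ∀ σ : K, f σ 1 = 1)
    (hnc : ∃ σ τ : K, f σ τ ∉ Subgroup.center G) :
    let m : K × G → K × G → K × G :=
      fun p q => (p.1 * q.1, f p.1 q.1 * p.2 * q.2)
    ¬ (∀ t : G, ∀ x y : K × G,
        m (m ((1 : K), t) x) y = m ((1 : K), t) (m x y)) := by
  intro m h
  obtain ⟨σ, τ, hc⟩ := hnc
  rw [Subgroup.mem_center_iff] at hc
  push_neg at hc
  obtain ⟨g, hg⟩ := hc
  have := h g (σ, 1) (τ, 1)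
  simp only [m, hf1, hf2, one_mul, mul_one, Prod.mk.injEq] at this
  simp only [MLoop.one_mul] at this
  exact hg this.2.symm
end

section
/- If a loop L has a Schreier decomposition with respect to a normal subgroup G (i.e. there is a Schreier loop L(Θ,f) on K×G and an isomorphism F : L(Θ,f) → L with F(ε,t) = t for all t ∈ G), then G is middle and right nuclear in L. -/
universe u v

/-- if a loop `L` has a Schreier decomposition with respect to a normal
subgroup `G` (an isomorphism `F : L(Θ,f) → L` from a Schreier loop on `K × G` with
`F(ε,t) = t` for all `t ∈ G`), then `G` is middle and right nuclear in `L`. -/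
theorem schreier_stmt8 {L : Type u} [MLoop L] (G : Set L) [Group G]
    (hGmul : ∀ a b : G, ((a * b : G) : L) = (a : L) * (b : L))
    (hGone : ((1 : G) : L) = 1)
    (hnorm : IsNormalSubloop G)
    (hdec : ∃ (K : Type u) (iK : MLoop K) (D : @SchreierData K (↥G) iK _)
        (F : K × G → L),
      Function.Bijective F ∧ (∀ p q : K × G, F (D.mul p q) = F p * F q) ∧
      ∀ t : G, F (iK.toOne.one, t) = (t : L)) :
    ∀ x ∈ G, x ∈ middleNucleus L ∧ x ∈ rightNucleus L := by
  obtain ⟨K, iK, D, F, hbij, hmul, hone⟩ := hdec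
  intro u hu
  set u' : G := ⟨u, hu⟩ with hu'def
  have huF : F ((1 : K), u') = u := hone u'
  -- multiplying on the right by u
  have key1 : ∀ (τ : K) (t : G), F (τ, t) * u = F (τ, t * u') := by
    intro τ t
    rw [← huF, ← hmul]
    have : D.mul (τ, t) ((1 : K), u') = (τ, t * u') := by
      simp [SchreierData.mul, D.f_one_right, D.theta_one, MLoop.mul_one]
    rw [this]
  -- multiplying on the left by u
  have key2 : ∀ (σ : K) (s : G), u * F (σ, s) = F (σ, D.Θ σ u' * s) := by
    intro σ s
    rw [← huF, ← hmul]
    have : D.mul ((1 : K), u') (σ, s) = (σ, D.Θ σ u' * s) := by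
      simp [SchreierData.mul, D.f_one_left, MLoop.one_mul]
    rw [this]
  constructor
  · intro x y
    obtain ⟨⟨τ, t⟩, rfl⟩ := hbij.2 x
    obtain ⟨⟨σ, s⟩, rfl⟩ := hbij.2 y
    rw [key1, key2, ← hmul, ← hmul]
    simp [SchreierData.mul, mul_assoc]
  · intro x y
    obtain ⟨⟨τ, t⟩, rfl⟩ := hbij.2 x
    obtain ⟨⟨σ, s⟩, rfl⟩ := hbij.2 y
    rw [← hmul, key1, key1, ← hmul]
    simp [SchreierData.mul, mul_assoc]
end

section
/- Let G be a middle and right nuclear normal subgroup of a loop L, let (κ,Σ) be a data pair for G (κ : K → L/G an isomorphism from a loop K, Σ a left transversal of L/G with e ∈ Σ), and let l : K → L be defined by l_σ = Σ ∩ κ(σ). Define Θ_σ = (T_{l_σ})^{-1}|_G and f(σ,τ) = l_{στ}\(l_σ·l_τ). Then L(Θ,f) is a Schreier loop on K×G and the map F : L(Θ,f) → L defined by F(σ,s) = l_σ·s is a Schreier decomposition of L with respect to G whose underlying isomorphism is κ. Conversely, if F : L(Θ,f) → L is any Schreier decomposition of L with respect to G, then G is middle and right nuclear, F has the form F(σ,s)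 = l_σ·s with l_σ = F(σ,e), and Θ and f satisfy Θ_σ = (T_{l_σ})^{-1}|_G and f(σ,τ) = l_{στ}\(l_σ·l_τ). -/
universe u v

section Helpers

namespace MLoop

variable {L : Type u} [MLoop L]

theorem mul_left_cancel' {x y z : L} (h : x * y = x * z) : y = z :=
  (MLoop.mul_left_bij x).1 h

theorem mul_right_cancel' {x y z : L} (h : y * x = z * x) : y = z :=
  (MLoop.mul_right_bij x).1 h

theorem mul_ldiv (x y : L) : x * ldiv x y = y :=
  Function.invFun_eq ((MLoop.mul_left_bij x).2 y)

theorem ldiv_eq {x y z : L} (h : x * z = y) : ldiv x y = z :=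
  mul_left_cancel' (x := x) (by rw [mul_ldiv, h])

theorem rdiv_mul (x y : L) : rdiv x y * y = x :=
  Function.invFun_eq ((MLoop.mul_right_bij y).2 x)

theorem rdiv_eq {x y z : L} (h : z * y = x) : rdiv x y = z :=
  mul_right_cancel' (x := y) (by rw [rdiv_mul, h])

theorem midInner_eq {x t z : L} (h : z * x = x * t) : midInner x t = z := by
  unfold midInner
  rw [← h]
  exact Function.leftInverse_invFun (MLoop.mul_right_bij x).1 z

end MLoop

end Helpers

/-- let `G` be a normal subgroup of the loop `L`, with the factor loop
`L/G` realized as a surjective loop homomorphism `π : L → Q` with kernel `G`.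
Direct part: if `G` is middle and right nuclear, then for any data pair `(κ, S)` (an
isomorphism `κ : K → L/G` and a left transversal `S` of `L/G` containing the identity)
with section `l : K → L`, `l σ = S ∩ κ(σ)`, the functions `Θ_σ = (T_{l_σ})⁻¹|_G` and
`f(σ,τ) = l_{στ} \ (l_σ · l_τ)` constitute a Schreier loop `L(Θ,f)` on `K × G`, and
`F(σ,s) = l_σ · s` is a Schreier decomposition of `L` with respect to `G` with
underlying isomorphism `κ`.
Converse part: if `F : L(Θ,f) → L` is any Schreier decomposition of `L` with respect to
`G`, then `G` is middle and right nuclear, `F(σ,s) = l_σ · s` where `l_σ = F(σ,e)`, and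
`Θ` and `f` satisfy `Θ_σ = (T_{l_σ})⁻¹|_G` and `f(σ,τ) = l_{στ} \ (l_σ · l_τ)`. -/
theorem schreier_stmt11 {L : Type u} [MLoop L] (G : Set L) [Group G]
    (hGmul : ∀ a b : G, ((a * b : G) : L) = (a : L) * (b : L))
    (hGone : ((1 : G) : L) = 1)
    (hnorm : IsNormalSubloop G)
    {Q : Type u} [MLoop Q] (π : L → Q)
    (hπ : ∀ x y : L, π (x * y) = π x * π y)
    (hπsurj : Function.Surjective π)
    (hker : G = {x : L | π x = 1})
    {K : Type u} [MLoop K] :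
    -- direct part
    ((G ⊆ middleNucleus L ∩ rightNucleus L) →
      ∀ κ : K → Q, Function.Bijective κ → (∀ a b : K, κ (a * b) = κ a * κ b) →
      ∀ S : Set L, (1 : L) ∈ S → Set.BijOn π S Set.univ →
      ∀ l : K → L, (∀ σ : K, l σ ∈ S ∧ π (l σ) = κ σ) →
      ∃ D : SchreierData K G,
        (∀ (σ : K) (t : G), MLoop.midInner (l σ) ((D.Θ σ t : G) : L) = (t : L)) ∧
        (∀ σ τ : K, ((D.f σ τ : G) : L) = MLoop.ldiv (l (σ * τ)) (l σ * l τ)) ∧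
        Function.Bijective (fun p : K × G => l p.1 * (p.2 : L)) ∧
        (∀ p q : K × G,
          l (D.mul p q).1 * ((D.mul p q).2 : L)
            = (l p.1 * (p.2 : L)) * (l q.1 * (q.2 : L))) ∧
        (∀ t : G, l 1 * (t : L) = (t : L)) ∧
        (∀ σ : K, π (l σ * ((1 : G) : L)) = κ σ)) ∧
    -- converse part
    (∀ (D : SchreierData K G) (F : K × G → L),
      Function.Bijective F → (∀ p q : K × G, F (D.mul p q) = F p * F q) →
      (∀ t : G, F (1, t) = (t : L)) →
      (G ⊆ middleNucleus L ∩ rightNucleus L) ∧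
      (∀ p : K × G, F p = F (p.1, 1) * (p.2 : L)) ∧
      (∀ (σ : K) (t : G), MLoop.midInner (F (σ, 1)) ((D.Θ σ t : G) : L) = (t : L)) ∧
      (∀ σ τ : K,
        ((D.f σ τ : G) : L) = MLoop.ldiv (F (σ * τ, 1)) (F (σ, 1) * F (τ, 1)))) := by
  have hπ1 : π (1 : L) = 1 := by
    apply MLoop.mul_left_cancel' (x := π (1 : L))
    rw [← hπ, MLoop.one_mul, MLoop.mul_one]
  have hπG : ∀ t : G, π (t : L) = 1 := fun t => (Set.ext_iff.mp hker (t : L)).1 t.2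
  have memG : ∀ x : L, π x = 1 → x ∈ G := fun x hx => (Set.ext_iff.mp hker x).2 hx
  constructor
  · -- direct part
    intro hnuc κ hκbij hκmul S hS1 hSbij l hl
    have hκ1 : κ (1 : K) = 1 := by
      apply MLoop.mul_left_cancel' (x := κ (1 : K))
      rw [← hκmul, MLoop.mul_one, MLoop.mul_one]
    have hπl : ∀ σ : K, π (l σ) = κ σ := fun σ => (hl σ).2
    have hl1 : l (1 : K) = 1 :=
      hSbij.injOn (hl 1).1 hS1 (by rw [hπl, hκ1, hπ1])
    have hldivG : ∀ x y : L, π y = π x → MLoop.ldiv x y ∈ G := by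
      intro x y h
      apply memG
      apply MLoop.mul_left_cancel' (x := π x)
      rw [MLoop.mul_one, ← hπ, MLoop.mul_ldiv, h]
    have hrdivG : ∀ x y : L, π x = π y → MLoop.rdiv x y ∈ G := by
      intro x y h
      apply memG
      apply MLoop.mul_right_cancel' (x := π y)
      rw [MLoop.one_mul, ← hπ, MLoop.rdiv_mul, h]
    have hΘmem : ∀ (σ : K) (t : G), MLoop.ldiv (l σ) ((t : L) * l σ) ∈ G := fun σ t =>
      hldivG _ _ (by rw [hπ, hπG, MLoop.one_mul])
    have hΘinvmem : ∀ (σ : K) (u : G), MLoop.rdiv (l σ * (u : L)) (l σ) ∈ G := fun σ u =>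
      hrdivG _ _ (by rw [hπ, hπG, MLoop.mul_one])
    have hfmem : ∀ σ τ : K, MLoop.ldiv (l (σ * τ)) (l σ * l τ) ∈ G := fun σ τ =>
      hldivG _ _ (by rw [hπ, hπl, hπl, hπl, hκmul])
    -- the key translation identity for Θ
    have hθ : ∀ (σ : K) (t : G), l σ * MLoop.ldiv (l σ) ((t : L) * l σ) = (t : L) * l σ :=
      fun σ t => MLoop.mul_ldiv _ _
    -- nuclear facts
    have hm : ∀ (u : L), u ∈ G → ∀ x y : L, x * u * y = x * (u * y) :=
      fun u hu => (hnuc hu).1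
    have hr : ∀ (u : L), u ∈ G → ∀ x y : L, x * y * u = x * (y * u) :=
      fun u hu => (hnuc hu).2
    refine ⟨{
        Θ := fun σ => {
          toFun := fun t => ⟨MLoop.ldiv (l σ) ((t : L) * l σ), hΘmem σ t⟩
          invFun := fun u => ⟨MLoop.rdiv (l σ * (u : L)) (l σ), hΘinvmem σ u⟩
          left_inv := by
            intro t
            apply Subtype.ext
            apply MLoop.rdiv_eq
            exact (hθ σ t).symm
          right_inv := by
            intro u
            apply Subtype.ext
            apply MLoop.ldiv_eq
            exact (MLoop.rdiv_mul _ _).symm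
          map_mul' := by
            intro t s
            apply Subtype.ext
            refine Eq.trans ?_ (hGmul _ _).symm
            apply MLoop.mul_left_cancel' (x := l σ)
            rw [hθ σ (t * s), hGmul]
            calc (t : L) * (s : L) * l σ
                = (t : L) * ((s : L) * l σ) := hm _ s.2 _ _
              _ = (t : L) * (l σ * MLoop.ldiv (l σ) ((s : L) * l σ)) := by
                  rw [hθ σ s]
              _ = (t : L) * l σ * MLoop.ldiv (l σ) ((s : L) * l σ) :=
                  (hr _ (hΘmem σ s) _ _).symm
              _ = l σ * MLoop.ldiv (l σ) ((t : L) * l σ)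
                    * MLoop.ldiv (l σ) ((s : L) * l σ) := by rw [hθ σ t]
              _ = l σ * (MLoop.ldiv (l σ) ((t : L) * l σ)
                    * MLoop.ldiv (l σ) ((s : L) * l σ)) :=
                  hr _ (hΘmem σ s) _ _ }
        f := fun σ τ => ⟨MLoop.ldiv (l (σ * τ)) (l σ * l τ), hfmem σ τ⟩
        theta_one := by
          apply MulEquiv.ext
          intro t
          apply Subtype.ext
          show MLoop.ldiv (l 1) ((t : L) * l 1) = (t : L)
          rw [hl1]
          exact MLoop.ldiv_eq (by rw [MLoop.one_mul, MLoop.mul_one])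
        f_one_left := by
          intro σ
          apply Subtype.ext
          show MLoop.ldiv (l (1 * σ)) (l 1 * l σ) = ((1 : G) : L)
          rw [hGone, MLoop.one_mul, hl1, MLoop.one_mul]
          exact MLoop.ldiv_eq (MLoop.mul_one _)
        f_one_right := by
          intro σ
          apply Subtype.ext
          show MLoop.ldiv (l (σ * 1)) (l σ * l 1) = ((1 : G) : L)
          rw [hGone, MLoop.mul_one, hl1, MLoop.mul_one]
          exact MLoop.ldiv_eq (MLoop.mul_one _) }, ?_, ?_, ?_, ?_, ?_, ?_⟩
    · intro σ t
      exact MLoop.midInner_eq (hθ σ t).symm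
    · intro σ τ
      rfl
    · constructor
      · -- injective
        intro p q h
        have h' : l p.1 * (p.2 : L) = l q.1 * (q.2 : L) := h
        have hπp : ∀ r : K × G, π (l r.1 * (r.2 : L)) = κ r.1 := by
          intro r
          rw [hπ, hπG, MLoop.mul_one, hπl]
        have h1 : p.1 = q.1 := by
          apply hκbij.1
          rw [← hπp p, ← hπp q, h']
        have h2 : p.2 = q.2 := by
          apply Subtype.ext
          apply MLoop.mul_left_cancel' (x := l p.1)
          rw [h', h1]
        exact Prod.ext h1 h2
      · -- surjective
        intro x
        obtain ⟨σ, hσ⟩ := hκbij.2 (π x)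
        refine ⟨(σ, ⟨MLoop.ldiv (l σ) x, hldivG _ _ (by rw [hπl, hσ])⟩), ?_⟩
        exact MLoop.mul_ldiv _ _
    · -- multiplicativity
      intro p q
      show l (p.1 * q.1) * ((_ * _ * _ : G) : L) = _
      rw [hGmul, hGmul]
      set a := l p.1
      set b := l q.1
      set c := l (p.1 * q.1)
      set t := ((p.2 : G) : L)
      set s := ((q.2 : G) : L)
      set Fv := MLoop.ldiv c (a * b) with hFv
      set Tv := MLoop.ldiv b (t * b) with hTv
      have hFvG : Fv ∈ G := hfmem p.1 q.1
      have hTvG : Tv ∈ G := hΘmem q.1 p.2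
      show c * (Fv * Tv * s) = a * t * (b * s)
      calc c * (Fv * Tv * s)
          = c * (Fv * Tv) * s := (hr _ q.2.2 _ _).symm
        _ = c * Fv * Tv * s := by rw [hm _ hFvG c Tv]
        _ = a * b * Tv * s := by rw [hFv, MLoop.mul_ldiv]
        _ = a * (b * Tv) * s := by rw [hr _ hTvG a b]
        _ = a * (t * b) * s := by rw [hTv, MLoop.mul_ldiv]
        _ = a * t * b * s := by rw [hm _ p.2.2 a b]
        _ = a * t * (b * s) := hr _ q.2.2 _ _
    · intro t
      rw [hl1, MLoop.one_mul]
    · intro σ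
      rw [hGone, MLoop.mul_one, hπl]
  · -- converse part
    intro D F hFbij hFmul hF1
    have hΘ11 : ∀ t : G, D.Θ 1 t = t := by
      intro t; rw [D.theta_one]; rfl
    have hstep : ∀ (σ τ : K) (t s : G),
        F (σ, t) * F (τ, s) = F (σ * τ, D.f σ τ * D.Θ τ t * s) :=
      fun σ τ t s => (hFmul (σ, t) (τ, s)).symm
    have hper : ∀ (τ : K) (b t : G), F (τ, b) * (t : L) = F (τ, b * t) := by
      intro τ b t
      rw [← hF1 t, hstep, MLoop.mul_one, D.f_one_right, hΘ11, one_mul]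
    have hlper : ∀ (τ : K) (t b : G), (t : L) * F (τ, b) = F (τ, D.Θ τ t * b) := by
      intro τ t b
      rw [← hF1 t, hstep, MLoop.one_mul, D.f_one_left, one_mul]
    have hmid : ∀ (t : G) (x y : L), x * (t : L) * y = x * ((t : L) * y) := by
      intro t x y
      obtain ⟨⟨σ, a⟩, rfl⟩ := hFbij.2 x
      obtain ⟨⟨τ, b⟩, rfl⟩ := hFbij.2 y
      rw [hper, hlper, hstep, hstep]
      have : D.f σ τ * D.Θ τ (a * t) * b = D.f σ τ * D.Θ τ a * (D.Θ τ t * b) := by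
        rw [map_mul]; simp [mul_assoc]
      rw [this]
    have hright : ∀ (t : G) (x y : L), x * y * (t : L) = x * (y * (t : L)) := by
      intro t x y
      obtain ⟨⟨σ, a⟩, rfl⟩ := hFbij.2 x
      obtain ⟨⟨τ, b⟩, rfl⟩ := hFbij.2 y
      rw [hper, hstep, hper, hstep]
      rw [mul_assoc (D.f σ τ * D.Θ τ a) b t]
    refine ⟨?_, ?_, ?_, ?_⟩
    · intro u hu
      exact ⟨fun x y => hmid ⟨u, hu⟩ x y, fun x y => hright ⟨u, hu⟩ x y⟩
    · intro p
      rw [hper, one_mul]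
    · intro σ t
      apply MLoop.midInner_eq
      rw [hper, hlper, one_mul, mul_one]
    · intro σ τ
      symm
      apply MLoop.ldiv_eq
      rw [hper, hstep, one_mul, map_one, mul_one, mul_one]
end

section
/- If a loop L satisfies at least one of the following conditions: (i) the left inverse property (there is a bijection x ↦ x^{-1} of L with x^{-1}·(x·y) = y for all x,y), (ii) the left alternative law (x·(x·y) = (x·x)·y for all x,y), (iii) flexibility (x·(y·x) = (x·y)·x for all x,y), then every middle and right nuclear normal subgroup G of L is nuclear, i.e. G is also contained in the left nucleus of L. -/
universe u v

/-- `Sm c u` is the unique element with `c * Sm c u = u * c`. -/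
noncomputable def Sm {L : Type u} [MLoop L] (c u : L) : L := MLoop.ldiv c (u * c)

theorem Sm_spec {L : Type u} [MLoop L] (c u : L) : c * Sm c u = u * c :=
  Function.rightInverse_invFun (MLoop.mul_left_bij c).2 (u * c)

/-- if a loop `L` has the left inverse property, or is left alternative,
or is flexible, then every middle and right nuclear normal subgroup `G` of `L` is
nuclear, i.e. `G` is also contained in the left nucleus of `L`. -/
theorem schreier_stmt13 {L : Type u} [MLoop L]
    (hprop :
      (∃ inv : L → L, Function.Bijective inv ∧ ∀ x y : L, inv x * (x * y) = y) ∨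
      (∀ x y : L, x * (x * y) = (x * x) * y) ∨
      (∀ x y : L, x * (y * x) = (x * y) * x))
    (G : Set L) [Group G]
    (hGmul : ∀ a b : G, ((a * b : G) : L) = (a : L) * (b : L))
    (hGone : ((1 : G) : L) = 1)
    (hnorm : IsNormalSubloop G)
    (hnuc : G ⊆ middleNucleus L ∩ rightNucleus L) :
    G ⊆ leftNucleus L := by
  classical
  obtain ⟨M, iM, f, hf0, hGdef0⟩ := hnorm
  letI : MLoop M := iM
  have hf : ∀ x y : L, f (x * y) = f x * f y := hf0
  have hGdef : G = {x : L | f x = (1 : M)} := hGdef0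
  have lcanL : ∀ (a : L) {y z : L}, a * y = a * z → y = z := by
    intro a y z h; exact (MLoop.mul_left_bij a).1 h
  have rcanL : ∀ (a : L) {y z : L}, y * a = z * a → y = z := by
    intro a y z h; exact (MLoop.mul_right_bij a).1 h
  have lcanM : ∀ (a : M) {y z : M}, a * y = a * z → y = z := by
    intro a y z h; exact (MLoop.mul_left_bij a).1 h
  have hmemf : ∀ z : L, z ∈ G ↔ f z = (1 : M) := fun z => by
    rw [hGdef]; exact Iff.rfl
  have hNm : ∀ {u : L}, u ∈ G → ∀ x y : L, x * u * y = x * (u * y) :=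
    fun hu => (hnuc hu).1
  have hNr : ∀ {u : L}, u ∈ G → ∀ x y : L, x * y * u = x * (y * u) :=
    fun hu => (hnuc hu).2
  have hclosed : ∀ {a b : L}, a ∈ G → b ∈ G → a * b ∈ G := by
    intro a b ha hb
    have h := (⟨a, ha⟩ * ⟨b, hb⟩ : G).2
    rwa [hGmul ⟨a, ha⟩ ⟨b, hb⟩] at h
  have hSmem : ∀ (c : L) {u : L}, u ∈ G → Sm c u ∈ G := by
    intro c u hu
    have h1 : f c * f (Sm c u) = f u * f c := by rw [← hf, ← hf, Sm_spec]
    rw [(hmemf u).1 hu, MLoop.one_mul (f c)] at h1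
    have h2 : f c * f (Sm c u) = f c * (1 : M) := by rw [MLoop.mul_one]; exact h1
    exact (hmemf _).2 (lcanM (f c) h2)
  have hSone : ∀ y : L, Sm y (1 : L) = 1 := by
    intro y
    apply lcanL y
    rw [Sm_spec, MLoop.one_mul, MLoop.mul_one]
  have hShom : ∀ (y h k : L), h ∈ G → k ∈ G → Sm y (h * k) = Sm y h * Sm y k := by
    intro y h k hh hk
    apply lcanL y
    rw [Sm_spec]
    calc h * k * y = h * (k * y) := hNm hk h y
      _ = h * (y * Sm y k) := by rw [Sm_spec]
      _ = h * y * Sm y k := (hNr (hSmem y hk) h y).symm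
      _ = (y * Sm y h) * Sm y k := by rw [Sm_spec]
      _ = y * (Sm y h * Sm y k) := hNm (hSmem y hh) y (Sm y k)
  have key : ∀ x y u : L, u ∈ G → Sm (x * y) u = Sm y (Sm x u) := by
    intro x y u hu
    rcases hprop with ⟨inv, _, hlip⟩ | hLA | hflex
    · -- left inverse property
      have hinvx : ∀ a : L, inv a * a = 1 := fun a => by
        have h := hlip a 1
        rwa [MLoop.mul_one] at h
      obtain ⟨v, hv, h1⟩ : ∃ v : L, v ∈ G ∧ Sm x u * v = 1 := by
        refine ⟨((⟨Sm x u, hSmem x hu⟩⁻¹ : G) : L), (⟨Sm x u, hSmem x hu⟩⁻¹ : G).2, ?_⟩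
        have h := hGmul ⟨Sm x u, hSmem x hu⟩ (⟨Sm x u, hSmem x hu⟩⁻¹)
        rw [mul_inv_cancel, hGone] at h
        exact h.symm
      have hinv1 : (inv x * u) * (x * v) = 1 := by
        calc (inv x * u) * (x * v)
            = inv x * (u * (x * v)) := hNm hu (inv x) (x * v)
          _ = inv x * (u * x * v) := by rw [hNr hv u x]
          _ = inv x * (x * Sm x u * v) := by rw [Sm_spec]
          _ = inv x * (x * (Sm x u * v)) := by rw [hNm (hSmem x hu) x v]
          _ = inv x * (x * 1) := by rw [h1]
          _ = inv x * x := by rw [MLoop.mul_one]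
          _ = 1 := hinvx x
      have hinveq : inv (x * v) = inv x * u :=
        rcanL (x * v) ((hinvx (x * v)).trans hinv1.symm)
      have h3 : (inv x * u) * ((x * v) * y) = y * (Sm (x * y) u * Sm y v) := by
        calc (inv x * u) * ((x * v) * y)
            = (inv x * u) * (x * (v * y)) := by rw [hNm hv x y]
          _ = (inv x * u) * (x * (y * Sm y v)) := by rw [Sm_spec]
          _ = (inv x * u) * (x * y * Sm y v) := by rw [hNr (hSmem y hv) x y]
          _ = inv x * (u * (x * y * Sm y v)) := hNm hu (inv x) (x * y * Sm y v)
          _ = inv x * (u * (x * y) * Sm y v) := by rw [hNr (hSmem y hv) u (x * y)]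
          _ = inv x * ((x * y) * Sm (x * y) u * Sm y v) := by rw [Sm_spec]
          _ = inv x * ((x * y) * (Sm (x * y) u * Sm y v)) := by
                rw [hNm (hSmem (x * y) hu) (x * y) (Sm y v)]
          _ = inv x * (x * (y * (Sm (x * y) u * Sm y v))) := by
                rw [hNr (hclosed (hSmem (x * y) hu) (hSmem y hv)) x y]
          _ = y * (Sm (x * y) u * Sm y v) := hlip x (y * (Sm (x * y) u * Sm y v))
      have hkey1 : y * (Sm (x * y) u * Sm y v) = y := by
        have h2 := hlip (x * v) y
        rw [hinveq] at h2
        rw [← h3]; exact h2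
      have h4 : Sm (x * y) u * Sm y v = 1 :=
        lcanL y (hkey1.trans (MLoop.mul_one y).symm)
      have h5 : Sm y (Sm x u) * Sm y v = 1 := by
        rw [← hShom y (Sm x u) v (hSmem x hu) hv, h1]
        exact hSone y
      exact rcanL (Sm y v) (h4.trans h5.symm)
    · -- left alternative
      have hg : Sm (x * y) u * Sm y u ∈ G := hclosed (hSmem (x * y) hu) (hSmem y hu)
      have hh : Sm x u * u ∈ G := hclosed (hSmem x hu) hu
      have hL : (x * u) * ((x * u) * y) = (x * x) * (y * (Sm (x * y) u * Sm y u)) := by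
        calc (x * u) * ((x * u) * y)
            = (x * u) * (x * (u * y)) := by rw [hNm hu x y]
          _ = (x * u) * (x * (y * Sm y u)) := by rw [Sm_spec]
          _ = (x * u) * (x * y * Sm y u) := by rw [hNr (hSmem y hu) x y]
          _ = x * (u * (x * y * Sm y u)) := hNm hu x (x * y * Sm y u)
          _ = x * (u * (x * y) * Sm y u) := by rw [hNr (hSmem y hu) u (x * y)]
          _ = x * ((x * y) * Sm (x * y) u * Sm y u) := by rw [Sm_spec]
          _ = x * ((x * y) * (Sm (x * y) u * Sm y u)) := by
                rw [hNm (hSmem (x * y) hu) (x * y) (Sm y u)]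
          _ = x * (x * y) * (Sm (x * y) u * Sm y u) := (hNr hg x (x * y)).symm
          _ = (x * x) * y * (Sm (x * y) u * Sm y u) := by rw [hLA x y]
          _ = (x * x) * (y * (Sm (x * y) u * Sm y u)) := hNr hg (x * x) y
      have hR : ((x * u) * (x * u)) * y = (x * x) * (y * Sm y (Sm x u * u)) := by
        calc ((x * u) * (x * u)) * y
            = (x * (u * (x * u))) * y := by rw [hNm hu x (x * u)]
          _ = (x * (u * x * u)) * y := by rw [hNr hu u x]
          _ = (x * (x * Sm x u * u)) * y := by rw [Sm_spec]
          _ = (x * (x * (Sm x u * u))) * y := by rw [hNm (hSmem x hu) x u]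
          _ = ((x * x) * (Sm x u * u)) * y := by rw [hLA x (Sm x u * u)]
          _ = (x * x) * ((Sm x u * u) * y) := hNm hh (x * x) y
          _ = (x * x) * (y * Sm y (Sm x u * u)) := by rw [Sm_spec]
      have h3 := (hL.symm.trans (hLA (x * u) y)).trans hR
      have h4 : Sm (x * y) u * Sm y u = Sm y (Sm x u * u) :=
        lcanL y (lcanL (x * x) h3)
      rw [hShom y (Sm x u) u (hSmem x hu) hu] at h4
      exact rcanL (Sm y u) h4
    · -- flexible
      have hw : Sm (x * y) u * u ∈ G := hclosed (hSmem (x * y) hu) hu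
      have hw2 : Sm y (Sm x u) * u ∈ G := hclosed (hSmem y (hSmem x hu)) hu
      have hL : (y * u) * (x * (y * u)) = (y * x) * (y * (Sm (x * y) u * u)) := by
        calc (y * u) * (x * (y * u))
            = (y * u) * (x * y * u) := by rw [hNr hu x y]
          _ = y * (u * (x * y * u)) := hNm hu y (x * y * u)
          _ = y * (u * (x * y) * u) := by rw [hNr hu u (x * y)]
          _ = y * ((x * y) * Sm (x * y) u * u) := by rw [Sm_spec]
          _ = y * ((x * y) * (Sm (x * y) u * u)) := by
                rw [hNm (hSmem (x * y) hu) (x * y) u]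
          _ = y * (x * y) * (Sm (x * y) u * u) := (hNr hw y (x * y)).symm
          _ = (y * x) * y * (Sm (x * y) u * u) := by rw [hflex y x]
          _ = (y * x) * (y * (Sm (x * y) u * u)) := hNr hw (y * x) y
      have hR : ((y * u) * x) * (y * u) = (y * x) * (y * (Sm y (Sm x u) * u)) := by
        calc ((y * u) * x) * (y * u)
            = (y * (u * x)) * (y * u) := by rw [hNm hu y x]
          _ = (y * (x * Sm x u)) * (y * u) := by rw [Sm_spec]
          _ = (y * x * Sm x u) * (y * u) := by rw [hNr (hSmem x hu) y x]
          _ = (y * x) * (Sm x u * (y * u)) := hNm (hSmem x hu) (y * x) (y * u)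
          _ = (y * x) * (Sm x u * y * u) := by rw [hNr hu (Sm x u) y]
          _ = (y * x) * (y * Sm y (Sm x u) * u) := by rw [Sm_spec]
          _ = (y * x) * (y * (Sm y (Sm x u) * u)) := by
                rw [hNm (hSmem y (hSmem x hu)) y u]
      have h3 : (y * x) * (y * (Sm (x * y) u * u)) = (y * x) * (y * (Sm y (Sm x u) * u)) := by
        rw [← hL, ← hR]; exact hflex (y * u) x
      exact rcanL u (lcanL y (lcanL (y * x) h3))
  intro u hu
  show ∀ x y : L, u * x * y = u * (x * y)
  intro x y
  calc u * x * y = (x * Sm x u) * y := by rw [Sm_spec]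
    _ = x * (Sm x u * y) := hNm (hSmem x hu) x y
    _ = x * (y * Sm y (Sm x u)) := by rw [Sm_spec]
    _ = x * y * Sm y (Sm x u) := (hNr (hSmem y (hSmem x hu)) x y).symm
    _ = x * y * Sm (x * y) u := by rw [key x y u hu]
    _ = u * (x * y) := Sm_spec (x * y) u
end

section
/- If G is a middle and right nuclear normal subgroup of a loop L, then for all x ∈ L and r ∈ G the restricted middle inner mappings decompose as T_{x·r}|_G = T_x|_G ∘ ι_r and T_{r·x}|_G = ι_r ∘ T_x|_G, where ι_r is the inner automorphism ι_r(t) = r·t·r^{-1} of G. -/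
universe u v

lemma midInner_eq_of {L : Type u} [MLoop L] {x t z : L} (hz : z * x = x * t) :
    MLoop.midInner x t = z := by
  have hsurj : ∃ w, (fun z : L => z * x) w = x * t := ⟨z, hz⟩
  have h := Function.invFun_eq hsurj
  exact (MLoop.mul_right_bij x).injective (h.trans hz.symm)

lemma midInner_spec {L : Type u} [MLoop L] (x t : L) :
    MLoop.midInner x t * x = x * t := by
  have h := Function.invFun_eq (f := fun z : L => z * x)
    ((MLoop.mul_right_bij x).surjective (x * t))
  simpa [MLoop.midInner] using h

/-- if `G` is a middle and right nuclear normal subgroup of a loop `L`,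
then for all `x ∈ L` and `r ∈ G` the restricted middle inner mappings decompose as
`T_{x·r}|_G = T_x|_G ∘ ι_r` and `T_{r·x}|_G = ι_r ∘ T_x|_G`, where `ι_r(t) = r·t·r⁻¹`. -/
theorem schreier_stmt14 {L : Type u} [MLoop L] (G : Set L) [Group G]
    (hGmul : ∀ a b : G, ((a * b : G) : L) = (a : L) * (b : L))
    (hGone : ((1 : G) : L) = 1)
    (hnorm : IsNormalSubloop G)
    (hnuc : G ⊆ middleNucleus L ∩ rightNucleus L) :
    ∀ (x : L) (r t : G),
      MLoop.midInner (x * (r : L)) (t : L)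
        = MLoop.midInner x ((r * t * r⁻¹ : G) : L) ∧
      ∀ s : G, MLoop.midInner x (t : L) = (s : L) →
        MLoop.midInner ((r : L) * x) (t : L) = ((r * s * r⁻¹ : G) : L) := by
  intro x r t
  have hmr := (hnuc r.2).1
  have hrr := (hnuc r.2).2
  have hrt := (hnuc t.2).2
  constructor
  · apply midInner_eq_of
    set z := MLoop.midInner x ((r * t * r⁻¹ : G) : L) with hzdef
    have hz : z * x = x * ((r * t * r⁻¹ : G) : L) := midInner_spec _ _
    have hkey : ((r * t * r⁻¹ : G) : L) * (r : L) = (r : L) * (t : L) := by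
      rw [← hGmul, show (r * t * r⁻¹ * r : G) = r * t by group, hGmul]
    calc z * (x * (r:L)) = z * x * (r:L) := (hrr z x).symm
      _ = x * ((r * t * r⁻¹ : G) : L) * (r:L) := by rw [hz]
      _ = x * (((r * t * r⁻¹ : G) : L) * (r:L)) := hrr x _
      _ = x * ((r:L) * (t:L)) := by rw [hkey]
      _ = x * (r:L) * (t:L) := (hmr x (t:L)).symm
  · intro s hs
    have hms := (hnuc s.2).1
    have hz : (s:L) * x = x * (t:L) := by rw [← hs]; exact midInner_spec _ _
    have hkey : ((r * s * r⁻¹ : G) : L) * (r : L) = (r : L) * (s : L) := by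
      rw [← hGmul, show (r * s * r⁻¹ * r : G) = r * s by group, hGmul]
    apply midInner_eq_of
    calc ((r * s * r⁻¹ : G) : L) * ((r:L) * x)
        = ((r * s * r⁻¹ : G) : L) * (r:L) * x := (hmr _ x).symm
      _ = (r:L) * (s:L) * x := by rw [hkey]
      _ = (r:L) * ((s:L) * x) := hms (r:L) x
      _ = (r:L) * (x * (t:L)) := by rw [hz]
      _ = (r:L) * x * (t:L) := (hrt (r:L) x).symm
end

section
/- Let G be a middle and right nuclear normal subgroup of a loop L. Then the map x ↦ T_x|_G : L → Aut(G) is a homomorphism (i.e. T_{x·y}|_G = T_x|_G ∘ T_y|_G for all x,y ∈ L) if and only if G is nuclear, i.e. G is also contained in the left nucleus of L. -/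
universe u v

/-- for a middle and right nuclear normal subgroup `G` of a loop `L`, the
map `x ↦ T_x|_G : L → Aut(G)` is a homomorphism (`T_{x·y}|_G = T_x|_G ∘ T_y|_G`) iff `G`
is nuclear, i.e. `G` is also contained in the left nucleus of `L`. -/
theorem schreier_stmt16 {L : Type u} [MLoop L] (G : Set L) [Group G]
    (hGmul : ∀ a b : G, ((a * b : G) : L) = (a : L) * (b : L))
    (hGone : ((1 : G) : L) = 1)
    (hnorm : IsNormalSubloop G)
    (hnuc : G ⊆ middleNucleus L ∩ rightNucleus L) :
    (∀ (x y : L) (t : G),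
        MLoop.midInner (x * y) (t : L) = MLoop.midInner x (MLoop.midInner y (t : L))) ↔
      G ⊆ leftNucleus L := by
  obtain ⟨M, i, f, hf, hN⟩ := hnorm
  letI : MLoop M := i
  have hf' : ∀ x y : L, f (x * y) = f x * f y := hf
  have hN' : ∀ x : L, x ∈ G ↔ f x = 1 := fun x => by rw [hN]; rfl
  -- basic loop lemmas
  have ldiv_spec : ∀ x y : L, x * MLoop.ldiv x y = y := fun x y =>
    Function.invFun_eq ((MLoop.mul_left_bij x).surjective y)
  have mid_spec : ∀ x t : L, MLoop.midInner x t * x = x * t := fun x t =>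
    Function.invFun_eq ((MLoop.mul_right_bij x).surjective (x * t))
  have mid_eq : ∀ x t z : L, z * x = x * t → MLoop.midInner x t = z := by
    intro x t z h
    apply (MLoop.mul_right_bij x).injective
    show MLoop.midInner x t * x = z * x
    rw [mid_spec, h]
  -- T_x maps G into G
  have hmem : ∀ x t : L, t ∈ G → MLoop.midInner x t ∈ G := by
    intro x t ht
    rw [hN']
    have : f (MLoop.midInner x t) * f x = 1 * f x := by
      rw [← hf', mid_spec, hf', (hN' t).mp ht, MLoop.mul_one, MLoop.one_mul]
    exact (MLoop.mul_right_bij (f x)).injective this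
  -- T_x is surjective on G
  have hsurj : ∀ x z : L, z ∈ G → ∃ t, t ∈ G ∧ MLoop.midInner x t = z := by
    intro x z hz
    refine ⟨MLoop.ldiv x (z * x), ?_, mid_eq _ _ _ (ldiv_spec x (z * x)).symm⟩
    rw [hN']
    have : f x * f (MLoop.ldiv x (z * x)) = f x * 1 := by
      rw [← hf', ldiv_spec, hf', (hN' z).mp hz, MLoop.one_mul, MLoop.mul_one]
    exact (MLoop.mul_left_bij (f x)).injective this
  constructor
  · intro h u hu
    intro x y
    obtain ⟨a, haG, ha⟩ := hsurj x u hu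
    obtain ⟨t, htG, ht⟩ := hsurj y a haG
    have hkey : MLoop.midInner (x * y) t = u := by
      have := h x y ⟨t, htG⟩
      simpa [ht, ha] using this
    have h1 : u * (x * y) = (x * y) * t := by rw [← hkey, mid_spec]
    have h2 : u * x = x * a := by rw [← ha, mid_spec]
    have h3 : a * y = y * t := by rw [← ht, mid_spec]
    calc u * x * y = x * a * y := by rw [h2]
      _ = x * (a * y) := (hnuc haG).1 x y
      _ = x * (y * t) := by rw [h3]
      _ = x * y * t := ((hnuc htG).2 x y).symm
      _ = u * (x * y) := h1.symm
  · intro hleft x y t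
    have haG : MLoop.midInner y (t : L) ∈ G := hmem y t t.2
    have hbG : MLoop.midInner x (MLoop.midInner y (t : L)) ∈ G := hmem x _ haG
    apply mid_eq
    calc MLoop.midInner x (MLoop.midInner y (t : L)) * (x * y)
        = MLoop.midInner x (MLoop.midInner y (t : L)) * x * y := (hleft hbG x y).symm
      _ = x * MLoop.midInner y (t : L) * y := by rw [mid_spec]
      _ = x * (MLoop.midInner y (t : L) * y) := (hnuc haG).1 x y
      _ = x * (y * t) := by rw [mid_spec]
      _ = x * y * t := ((hnuc t.2).2 x y).symm
end

section
/- Let G be a middle and right nuclear normal subgroup of a loop L. Then L has an automorphism-free Schreier decomposition L(Id,f) with respect to G if and only if either of the following equivalent conditions holds: (A) the image of the map x ↦ T_x|_G : L → Aut(G) consists of inner automorphisms of G; (B) there exists a left transversal of L/G contained in the commutant C_L(G) = {u ∈ L : u·s = s·u for all s ∈ G}. -/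
universe u v

set_option linter.unusedSectionVars false
namespace Stmt17

variable {L : Type u} [MLoop L]

theorem mlc {x a b : L} (h : x * a = x * b) : a = b := (MLoop.mul_left_bij x).1 h
theorem mrc {x a b : L} (h : a * x = b * x) : a = b := (MLoop.mul_right_bij x).1 h
theorem mul_ldiv (x y : L) : x * MLoop.ldiv x y = y :=
  Function.invFun_eq ((MLoop.mul_left_bij x).2 y)
theorem midInner_mul (x t : L) : MLoop.midInner x t * x = x * t :=
  Function.invFun_eq ((MLoop.mul_right_bij x).2 (x * t))
theorem midInner_eq {x t z : L} (h : z * x = x * t) : MLoop.midInner x t = z :=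
  mrc (x := x) ((midInner_mul x t).trans h.symm)

end Stmt17
namespace Stmt17
section Constr
variable {L : Type u} [MLoop L] {M : Type v} [MLoop M]

def ksd (f : L → M) : Setoid L := ⟨fun x y => f x = f y, ⟨fun _ => rfl, Eq.symm, Eq.trans⟩⟩

variable (f : L → M) (hhom : ∀ x y : L, f (x * y) = f x * f y)

def kmk (x : L) : Quotient (ksd f) := Quotient.mk (ksd f) x

def kmul : Quotient (ksd f) → Quotient (ksd f) → Quotient (ksd f) :=
  Quotient.map₂ (· * ·) fun a a' ha b b' hb => show f (a * b) = f (a' * b') by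
    rw [hhom, hhom]; exact congrArg₂ (· * ·) ha hb

theorem kmul_mk (a b : L) : kmul f hhom (kmk f a) (kmk f b) = kmk f (a * b) := rfl

theorem kmk_eq {a b : L} (h : f a = f b) : kmk f a = kmk f b := Quotient.sound h
theorem kmk_exact {a b : L} (h : kmk f a = kmk f b) : f a = f b := Quotient.exact h

noncomputable def kloop : MLoop (Quotient (ksd f)) where
  mul := kmul f hhom
  one := kmk f 1
  one_mul := by
    refine Quotient.ind fun a => ?_
    show kmul f hhom (kmk f 1) (kmk f a) = kmk f a
    rw [kmul_mk, MLoop.one_mul]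
  mul_one := by
    refine Quotient.ind fun a => ?_
    show kmul f hhom (kmk f a) (kmk f 1) = kmk f a
    rw [kmul_mk, MLoop.mul_one]
  mul_left_bij := by
    refine Quotient.ind fun a => ?_
    constructor
    · refine Quotient.ind₂ fun b c h => ?_
      replace h : f (a * b) = f (a * c) := kmk_exact f h
      rw [hhom, hhom] at h
      exact kmk_eq f (mlc h)
    · refine Quotient.ind fun b => ?_
      refine ⟨kmk f (MLoop.ldiv a b), ?_⟩
      show kmul f hhom (kmk f a) (kmk f (MLoop.ldiv a b)) = kmk f b
      rw [kmul_mk, mul_ldiv]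
  mul_right_bij := by
    refine Quotient.ind fun a => ?_
    constructor
    · refine Quotient.ind₂ fun b c h => ?_
      replace h : f (b * a) = f (c * a) := kmk_exact f h
      rw [hhom, hhom] at h
      exact kmk_eq f (mrc h)
    · refine Quotient.ind fun b => ?_
      refine ⟨kmk f (MLoop.rdiv b a), ?_⟩
      show kmul f hhom (kmk f (MLoop.rdiv b a)) (kmk f a) = kmk f b
      rw [kmul_mk]
      exact congrArg (kmk f) (Function.invFun_eq ((MLoop.mul_right_bij a).2 b))

end Constr
end Stmt17
namespace Stmt17
section Main
variable {L : Type u} [MLoop L]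

theorem ldiv_self (x : L) : MLoop.ldiv x x = 1 :=
  mlc ((mul_ldiv x x).trans (MLoop.mul_one x).symm)

section WithG
variable (G : Set L) [Group G]
  (hGmul : ∀ a b : G, ((a * b : G) : L) = (a : L) * (b : L))
  (hGone : ((1 : G) : L) = 1)
  (hnuc : G ⊆ middleNucleus L ∩ rightNucleus L)

theorem hNm (hnuc : G ⊆ middleNucleus L ∩ rightNucleus L) (u : G) (x y : L) :
    x * (u : L) * y = x * ((u : L) * y) :=
  (hnuc u.2).1 x y

theorem hNr (hnuc : G ⊆ middleNucleus L ∩ rightNucleus L) (u : G) (x y : L) :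
    x * y * (u : L) = x * (y * (u : L)) :=
  (hnuc u.2).2 x y

include hGmul hnuc in
theorem B_to_A
    (S : Set L) (hStr : ∀ x : L, ∃! s : L, s ∈ S ∧ ∃ g : G, s = x * (g : L))
    (hScomm : S ⊆ {u : L | ∀ g : G, u * (g : L) = (g : L) * u}) :
    ∀ x : L, ∃ r : G, ∀ t : G,
      MLoop.midInner x (t : L) = ((r * t * r⁻¹ : G) : L) := by
  intro x
  obtain ⟨s, ⟨hsS, g, hsg⟩, -⟩ := hStr x
  refine ⟨g⁻¹, fun t => ?_⟩
  set z : G := g⁻¹ * t * g⁻¹⁻¹ with hzdef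
  refine midInner_eq (mrc (x := (g : L)) ?_)
  have hgz : g * z = t * g := by rw [hzdef]; group
  calc (z : L) * x * (g : L) = (z : L) * (x * (g : L)) := hNr G hnuc g _ _
    _ = (z : L) * s := by rw [← hsg]
    _ = s * (z : L) := (hScomm hsS z).symm
    _ = (x * (g : L)) * (z : L) := by rw [hsg]
    _ = x * ((g : L) * (z : L)) := hNr G hnuc z _ _
    _ = x * ((g * z : G) : L) := by rw [← hGmul g z]
    _ = x * ((t * g : G) : L) := by rw [hgz]
    _ = x * ((t : L) * (g : L)) := by rw [hGmul t g]
    _ = x * (t : L) * (g : L) := (hNr G hnuc g _ _).symm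

include hGmul hGone hnuc in
theorem A_to_B {M : Type v} [MLoop M] (f : L → M)
    (hhom : ∀ x y : L, f (x * y) = f x * f y) (hG : G = {x : L | f x = 1})
    (hA : ∀ x : L, ∃ r : G, ∀ t : G,
      MLoop.midInner x (t : L) = ((r * t * r⁻¹ : G) : L)) :
    ∃ S : Set L, (1 : L) ∈ S ∧
      (∀ x : L, ∃! s : L, s ∈ S ∧ ∃ g : G, s = x * (g : L)) ∧
      S ⊆ {u : L | ∀ g : G, u * (g : L) = (g : L) * u} := by
  classical
  choose r hr using hA
  have hmemf : ∀ g : G, f (g : L) = 1 := fun g =>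
    (Set.ext_iff.mp hG (g : L)).mp g.2
  have f1 : f (1 : L) = 1 := by
    have h := hhom 1 1
    rw [MLoop.one_mul] at h
    exact mlc (x := f 1) (by rw [MLoop.mul_one]; exact h.symm)
  have hcos : ∀ x s : L, f s = f x → ∃ g : G, s = x * (g : L) := by
    intro x s h
    refine ⟨⟨MLoop.ldiv x s, ?_⟩, (mul_ldiv x s).symm⟩
    rw [hG]
    show f _ = 1
    have h2 : f x * f (MLoop.ldiv x s) = f x := by rw [← hhom, mul_ldiv, h]
    exact mlc (x := f x) (by rw [MLoop.mul_one]; exact h2)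
  have hcomm : ∀ (x : L) (t : G),
      (x * (((r x)⁻¹ : G) : L)) * (t : L) = (t : L) * (x * (((r x)⁻¹ : G) : L)) := by
    intro x t
    set ρ : G := r x with hρ
    have h1 : ∀ u : G, ((ρ * u * ρ⁻¹ : G) : L) * x = x * (u : L) := fun u => by
      rw [← hr x u]; exact midInner_mul x (u : L)
    have h2 : (t : L) * x = x * ((ρ⁻¹ * t * ρ : G) : L) := by
      have h3 := h1 (ρ⁻¹ * t * ρ)
      rwa [show ρ * (ρ⁻¹ * t * ρ) * ρ⁻¹ = t from by group] at h3
    calc (x * ((ρ⁻¹ : G) : L)) * (t : L)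
        = x * (((ρ⁻¹ : G) : L) * (t : L)) := hNm G hnuc ρ⁻¹ x (t : L)
      _ = x * ((ρ⁻¹ * t : G) : L) := by rw [← hGmul ρ⁻¹ t]
      _ = x * ((ρ⁻¹ * t * ρ * ρ⁻¹ : G) : L) := by
            rw [show ρ⁻¹ * t * ρ * ρ⁻¹ = ρ⁻¹ * t from by group]
      _ = x * (((ρ⁻¹ * t * ρ : G) : L) * ((ρ⁻¹ : G) : L)) := by
            rw [hGmul (ρ⁻¹ * t * ρ) ρ⁻¹]
      _ = x * ((ρ⁻¹ * t * ρ : G) : L) * ((ρ⁻¹ : G) : L) := (hNr G hnuc ρ⁻¹ x _).symm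
      _ = (t : L) * x * ((ρ⁻¹ : G) : L) := by rw [← h2]
      _ = (t : L) * (x * ((ρ⁻¹ : G) : L)) := hNr G hnuc ρ⁻¹ (t : L) x
  let rep : L → L := fun x => Function.invFun f (f x)
  have hrep : ∀ x, f (rep x) = f x := fun x => Function.invFun_eq ⟨x, rfl⟩
  have hrepc : ∀ {x y : L}, f x = f y → rep x = rep y := by
    intro x y h
    show Function.invFun f (f x) = Function.invFun f (f y)
    rw [h]
  let c : L → L := fun x => if f x = 1 then 1 else rep x * (((r (rep x))⁻¹ : G) : L)
  have hfc : ∀ x, f (c x) = f x := by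
    intro x
    by_cases h : f x = 1
    · show f (if f x = 1 then _ else _) = f x
      rw [if_pos h, f1, h]
    · show f (if f x = 1 then _ else _) = f x
      rw [if_neg h, hhom, hmemf, MLoop.mul_one, hrep]
  refine ⟨Set.range c, ⟨1, ?_⟩, ?_, ?_⟩
  · show (if f (1 : L) = 1 then _ else _) = (1 : L)
    rw [if_pos f1]
  · intro x
    refine ⟨c x, ⟨⟨x, rfl⟩, hcos x (c x) (hfc x)⟩, ?_⟩
    rintro s' ⟨⟨y, rfl⟩, g', hg'⟩
    have hfy : f y = f x := by
      rw [← hfc y, hg', hhom, hmemf, MLoop.mul_one]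
    show (if f y = 1 then _ else _) = (if f x = 1 then _ else _)
    rw [hfy, hrepc hfy]
  · intro s hs
    obtain ⟨y, rfl⟩ := hs
    intro g
    by_cases h : f y = 1
    · show (if f y = 1 then _ else _) * _ = _ * (if f y = 1 then _ else _)
      rw [if_pos h, MLoop.one_mul, MLoop.mul_one]
    · show (if f y = 1 then _ else _) * _ = _ * (if f y = 1 then _ else _)
      rw [if_neg h]
      exact hcomm (rep y) g

include hGone in
theorem D_to_B
    (hD : ∃ (K : Type u) (iK : MLoop K) (D : @SchreierData K (↥G) iK _)
        (F : K × G → L),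
        (∀ σ : K, D.Θ σ = MulEquiv.refl G) ∧
        Function.Bijective F ∧ (∀ p q : K × G, F (D.mul p q) = F p * F q) ∧
        ∀ t : G, F (iK.toOne.one, t) = (t : L)) :
    ∃ S : Set L, (1 : L) ∈ S ∧
      (∀ x : L, ∃! s : L, s ∈ S ∧ ∃ g : G, s = x * (g : L)) ∧
      S ⊆ {u : L | ∀ g : G, u * (g : L) = (g : L) * u} := by
  obtain ⟨K, iK, D, F, hΘ, hFbij, hFhom, hFone⟩ := hD
  letI : MLoop K := iK
  have hcoe : ∀ g : G, (g : L) = F (1, g) := fun g => (hFone g).symm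
  have key1 : ∀ (σ : K) (t g : G), F (σ, t) * (g : L) = F (σ, t * g) := by
    intro σ t g
    rw [hcoe g, ← hFhom]
    show F (σ * 1, D.f σ 1 * D.Θ 1 t * g) = F (σ, t * g)
    rw [MLoop.mul_one, D.f_one_right, D.theta_one]
    show F (σ, 1 * t * g) = F (σ, t * g)
    rw [one_mul]
  have key2 : ∀ (σ : K) (t g : G), (g : L) * F (σ, t) = F (σ, g * t) := by
    intro σ t g
    rw [hcoe g, ← hFhom]
    show F (1 * σ, D.f 1 σ * D.Θ σ g * t) = F (σ, g * t)
    rw [MLoop.one_mul, D.f_one_left, hΘ σ]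
    show F (σ, 1 * g * t) = F (σ, g * t)
    rw [one_mul]
  refine ⟨Set.range (fun σ : K => F (σ, 1)), ⟨1, ?_⟩, ?_, ?_⟩
  · show F (1, (1 : G)) = (1 : L)
    rw [← hGone]
    exact hFone 1
  · intro x
    obtain ⟨⟨σ, t⟩, rfl⟩ := hFbij.2 x
    refine ⟨F (σ, 1), ⟨⟨σ, rfl⟩, t⁻¹, ?_⟩, ?_⟩
    · rw [key1, mul_inv_cancel]
    · rintro s' ⟨⟨σ', rfl⟩, g', hg'⟩
      rw [key1] at hg'
      have h := hFbij.1 hg'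
      have hσ : σ' = σ := congrArg Prod.fst h
      rw [hσ]
  · intro s hs g
    obtain ⟨σ, rfl⟩ := hs
    show F (σ, 1) * (g : L) = (g : L) * F (σ, 1)
    rw [key1, key2, one_mul, mul_one]

include hGmul hGone hnuc in
theorem B_to_D {M : Type u} [MLoop M] (f : L → M)
    (hhom : ∀ x y : L, f (x * y) = f x * f y) (hG : G = {x : L | f x = 1})
    (S : Set L) (hS1 : (1 : L) ∈ S)
    (hStr : ∀ x : L, ∃! s : L, s ∈ S ∧ ∃ g : G, s = x * (g : L))
    (hScomm : S ⊆ {u : L | ∀ g : G, u * (g : L) = (g : L) * u}) :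
    ∃ (K : Type u) (iK : MLoop K) (D : @SchreierData K (↥G) iK _)
      (F : K × G → L),
      (∀ σ : K, D.Θ σ = MulEquiv.refl G) ∧
      Function.Bijective F ∧ (∀ p q : K × G, F (D.mul p q) = F p * F q) ∧
      ∀ t : G, F (iK.toOne.one, t) = (t : L) := by
  classical
  have hmemf : ∀ g : G, f (g : L) = 1 := fun g => (Set.ext_iff.mp hG _).mp g.2
  have hmk : ∀ z : L, f z = 1 → z ∈ G := fun z h => (Set.ext_iff.mp hG z).mpr h
  let rep : L → L := fun x => (hStr x).choose
  have hrepS : ∀ x, rep x ∈ S := fun x => (hStr x).choose_spec.1.1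
  have hrepc : ∀ x, ∃ g : G, rep x = x * (g : L) := fun x => (hStr x).choose_spec.1.2
  have hrepu : ∀ x s, s ∈ S → (∃ g : G, s = x * (g : L)) → s = rep x :=
    fun x s hs hg => (hStr x).choose_spec.2 s ⟨hs, hg⟩
  have hfrep : ∀ x, f (rep x) = f x := fun x => by
    obtain ⟨g, hg⟩ := hrepc x
    rw [hg, hhom, hmemf, MLoop.mul_one]
  have hcos : ∀ x s : L, f s = f x → ∃ g : G, s = x * (g : L) := by
    intro x s h
    refine ⟨⟨MLoop.ldiv x s, ?_⟩, (mul_ldiv x s).symm⟩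
    refine hmk _ ?_
    have h2 : f x * f (MLoop.ldiv x s) = f x := by rw [← hhom, mul_ldiv, h]
    exact mlc (x := f x) (by rw [MLoop.mul_one]; exact h2)
  have hrepeq : ∀ {x y : L}, f x = f y → rep x = rep y := fun {x y} h =>
    hrepu y (rep x) (hrepS x) (hcos y (rep x) (by rw [hfrep, h]))
  let K := Quotient (ksd f)
  letI iK : MLoop K := kloop f hhom
  let p : K → L := Quotient.lift rep (fun a b h => hrepeq h)
  have hpS : ∀ k : K, p k ∈ S := by
    refine Quotient.ind ?_
    exact hrepS
  have hpcomm : ∀ (k : K) (g : G), p k * (g : L) = (g : L) * p k :=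
    fun k g => hScomm (hpS k) g
  have p1 : p iK.toOne.one = 1 := by
    show rep 1 = 1
    refine (hrepu 1 1 hS1 ⟨1, ?_⟩).symm
    rw [hGone, MLoop.mul_one]
  have hfpmul : ∀ k k' : K, f (p (k * k')) = f (p k) * f (p k') := by
    refine Quotient.ind₂ fun a b => ?_
    show f (rep (a * b)) = f (rep a) * f (rep b)
    rw [hfrep, hfrep, hfrep, hhom]
  have hmemld : ∀ k k' : K, f (MLoop.ldiv (p (k * k')) (p k * p k')) = 1 := by
    intro k k'
    have h1 : f (p (k * k') * MLoop.ldiv (p (k * k')) (p k * p k')) = f (p k * p k') := by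
      rw [mul_ldiv]
    rw [hhom, hhom, hfpmul] at h1
    exact mlc (x := f (p k) * f (p k')) (by rw [MLoop.mul_one]; exact h1)
  let fdata : K → K → G := fun k k' =>
    ⟨MLoop.ldiv (p (k * k')) (p k * p k'), hmk _ (hmemld k k')⟩
  have hfd : ∀ k k', p (k * k') * ((fdata k k' : G) : L) = p k * p k' :=
    fun k k' => mul_ldiv _ _
  have kinj : ∀ k k' : K, f (p k) = f (p k') → k = k' := by
    refine Quotient.ind₂ fun a b h => ?_
    refine Quotient.sound (show f a = f b from ?_)
    have h2 : f (rep a) = f (rep b) := h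
    rwa [hfrep, hfrep] at h2
  let D : @SchreierData K (↥G) iK _ :=
    { Θ := fun _ => MulEquiv.refl G
      f := fdata
      theta_one := rfl
      f_one_left := by
        intro σ
        apply Subtype.ext
        show MLoop.ldiv (p ((1 : K) * σ)) (p (1 : K) * p σ) = ((1 : G) : L)
        rw [MLoop.one_mul σ, show p (1 : K) = 1 from p1, MLoop.one_mul (p σ),
          ldiv_self, hGone]
      f_one_right := by
        intro σ
        apply Subtype.ext
        show MLoop.ldiv (p (σ * (1 : K))) (p σ * p (1 : K)) = ((1 : G) : L)
        rw [MLoop.mul_one σ, show p (1 : K) = 1 from p1, MLoop.mul_one (p σ),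
          ldiv_self, hGone] }
  let F : K × G → L := fun q => p q.1 * (q.2 : L)
  refine ⟨K, iK, D, F, fun σ => rfl, ⟨?_, ?_⟩, ?_, ?_⟩
  · rintro ⟨k, t⟩ ⟨k', t'⟩ h
    have h2 : f (p k * (t : L)) = f (p k' * (t' : L)) := congrArg f h
    rw [hhom, hhom, hmemf, hmemf, MLoop.mul_one, MLoop.mul_one] at h2
    obtain rfl : k = k' := kinj k k' h2
    have ht : t = t' := Subtype.ext (mlc (x := p k) h)
    rw [ht]
  · intro x
    have hfl : f (MLoop.ldiv (p (kmk f x)) x) = 1 := by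
      have h1 : f (p (kmk f x) * MLoop.ldiv (p (kmk f x)) x) = f x := by rw [mul_ldiv]
      rw [hhom, show f (p (kmk f x)) = f x from hfrep x] at h1
      exact mlc (x := f x) (by rw [MLoop.mul_one]; exact h1)
    exact ⟨(kmk f x, ⟨_, hmk _ hfl⟩), mul_ldiv _ x⟩
  · rintro ⟨k, t⟩ ⟨k', t'⟩
    show p (k * k') * ((fdata k k' * (MulEquiv.refl (↥G)) t * t' : G) : L)
        = (p k * (t : L)) * (p k' * (t' : L))
    refine Eq.symm ?_
    calc (p k * (t : L)) * (p k' * (t' : L))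
        = (p k * (t : L) * p k') * (t' : L) := (hNr G hnuc t' _ _).symm
      _ = (p k * ((t : L) * p k')) * (t' : L) := by
            rw [hNm G hnuc t (p k) (p k')]
      _ = (p k * (p k' * (t : L))) * (t' : L) := by rw [← hpcomm k' t]
      _ = (p k * p k' * (t : L)) * (t' : L) := by rw [hNr G hnuc t (p k) (p k')]
      _ = (p (k * k') * ((fdata k k' : G) : L) * (t : L)) * (t' : L) := by
            rw [hfd k k']
      _ = (p (k * k') * (((fdata k k' : G) : L) * (t : L))) * (t' : L) := by
            rw [hNm G hnuc (fdata k k') (p (k * k')) (t : L)]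
      _ = (p (k * k') * ((fdata k k' * t : G) : L)) * (t' : L) := by
            rw [← hGmul (fdata k k') t]
      _ = p (k * k') * (((fdata k k' * t : G) : L) * (t' : L)) := hNr G hnuc t' _ _
      _ = p (k * k') * ((fdata k k' * t * t' : G) : L) := by
            rw [← hGmul (fdata k k' * t) t']
      _ = p (k * k') * ((fdata k k' * (MulEquiv.refl (↥G)) t * t' : G) : L) := rfl
  · intro t
    show p iK.toOne.one * (t : L) = (t : L)
    rw [p1, MLoop.one_mul]

end WithG
end Main
end Stmt17
/-- a loop `L` has an automorphism-free Schreier decomposition `L(Id,f)`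
with respect to a middle and right nuclear normal subgroup `G` iff (A) every restricted
middle inner mapping `T_x|_G` is an inner automorphism of `G`, iff (B) there is a left
transversal of `L/G` contained in the commutant `C_L(G)`. -/
theorem schreier_stmt17 {L : Type u} [MLoop L] (G : Set L) [Group G]
    (hGmul : ∀ a b : G, ((a * b : G) : L) = (a : L) * (b : L))
    (hGone : ((1 : G) : L) = 1)
    (hnorm : IsNormalSubloop G)
    (hnuc : G ⊆ middleNucleus L ∩ rightNucleus L) :
    ((∃ (K : Type u) (iK : MLoop K) (D : @SchreierData K (↥G) iK _)
        (F : K × G → L),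
        (∀ σ : K, D.Θ σ = MulEquiv.refl G) ∧
        Function.Bijective F ∧ (∀ p q : K × G, F (D.mul p q) = F p * F q) ∧
        ∀ t : G, F (iK.toOne.one, t) = (t : L)) ↔
      (∀ x : L, ∃ r : G, ∀ t : G,
        MLoop.midInner x (t : L) = ((r * t * r⁻¹ : G) : L))) ∧
    ((∀ x : L, ∃ r : G, ∀ t : G,
        MLoop.midInner x (t : L) = ((r * t * r⁻¹ : G) : L)) ↔
      (∃ S : Set L, (1 : L) ∈ S ∧
        (∀ x : L, ∃! s : L, s ∈ S ∧ ∃ g : G, s = x * (g : L)) ∧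
        S ⊆ {u : L | ∀ g : G, u * (g : L) = (g : L) * u})) := by

  constructor
  · constructor
    · intro hD
      obtain ⟨S, hS1, hStr, hScomm⟩ := Stmt17.D_to_B G hGone hD
      exact Stmt17.B_to_A G hGmul hnuc S hStr hScomm
    · intro hA
      obtain ⟨M, i, f, hhom, hG⟩ := hnorm
      letI : MLoop M := i
      obtain ⟨S, hS1, hStr, hScomm⟩ := Stmt17.A_to_B G hGmul hGone hnuc f hhom hG hA
      exact Stmt17.B_to_D G hGmul hGone hnuc f hhom hG S hS1 hStr hScomm
  · constructor
    · intro hA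
      obtain ⟨M, i, f, hhom, hG⟩ := hnorm
      letI : MLoop M := i
      exact Stmt17.A_to_B G hGmul hGone hnuc f hhom hG hA
    · rintro ⟨S, hS1, hStr, hScomm⟩
      exact Stmt17.B_to_A G hGmul hnuc S hStr hScomm
end

section
/- Let L(Θ,f) and L(Θ',f') be Schreier loops defined on K×G. Then L(Θ',f') is equivalent to L(Θ,f) — i.e. there exists a loop L which is an extension of G by K such that both L(Θ,f) and L(Θ',f') are Schreier decompositions of L with respect to G with the same underlying isomorphism κ : K → L/G — if and only if there exists a function n : K → G with n(ε) = e such that Θ'_σ = ι_{n(σ)}^{-1} ∘ Θ_σ and f'(σ,τ) = n(στ)^{-1}·f(σ,τ)·Θ_τ(n(σ))·n(τ) for all σ,τ ∈ K, where ι_r(t) = r·t·r^{-1}. -/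
universe u v

namespace SchreierData

variable {K : Type u} {G : Type v} [MLoop K] [Group G] (D : SchreierData K G)

lemma mul_one_left (σ : K) (c g : G) : D.mul (σ, c) ((1 : K), g) = (σ, c * g) := by
  simp [SchreierData.mul, D.f_one_right, D.theta_one, MLoop.mul_one]

lemma mul_left_bij' (p : K × G) : Function.Bijective fun q => D.mul p q := by
  constructor
  · rintro ⟨a, s⟩ ⟨b, u⟩ h
    have h1 : p.1 * a = p.1 * b := congrArg Prod.fst h
    have hab : a = b := (MLoop.mul_left_bij p.1).1 h1
    subst hab
    have h2 : D.f p.1 a * D.Θ a p.2 * s = D.f p.1 a * D.Θ a p.2 * u := congrArg Prod.snd h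
    simpa using h2
  · rintro ⟨x, y⟩
    obtain ⟨a, ha⟩ := (MLoop.mul_left_bij p.1).2 x
    refine ⟨(a, (D.f p.1 a * D.Θ a p.2)⁻¹ * y), ?_⟩
    simp only [SchreierData.mul]
    exact Prod.ext ha (by group)

lemma mul_right_bij' (q : K × G) : Function.Bijective fun p => D.mul p q := by
  constructor
  · rintro ⟨a, s⟩ ⟨b, u⟩ h
    have h1 : a * q.1 = b * q.1 := congrArg Prod.fst h
    have hab : a = b := (MLoop.mul_right_bij q.1).1 h1
    subst hab
    have h2 : D.f a q.1 * D.Θ q.1 s * q.2 = D.f a q.1 * D.Θ q.1 u * q.2 := congrArg Prod.snd h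
    have h3 := mul_left_cancel (mul_right_cancel h2)
    exact Prod.ext rfl ((D.Θ q.1).injective h3)
  · rintro ⟨x, y⟩
    obtain ⟨a, ha⟩ := (MLoop.mul_right_bij q.1).2 x
    refine ⟨(a, (D.Θ q.1).symm ((D.f a q.1)⁻¹ * (y * q.2⁻¹))), ?_⟩
    simp only [SchreierData.mul, MulEquiv.apply_symm_apply]
    exact Prod.ext ha (by group)

/-- The Schreier loop structure on `K × G`. -/
def loop : MLoop (K × G) where
  mul := D.mul
  one := ((1 : K), (1 : G))
  mul_left_bij := D.mul_left_bij'
  mul_right_bij := D.mul_right_bij'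
  one_mul := by
    rintro ⟨τ, t⟩
    show D.mul ((1 : K), (1 : G)) (τ, t) = (τ, t)
    simp [SchreierData.mul, D.f_one_left, MLoop.one_mul]
  mul_one := by
    rintro ⟨τ, t⟩
    show D.mul (τ, t) ((1 : K), (1 : G)) = (τ, t)
    simp [SchreierData.mul, D.f_one_right, D.theta_one, MLoop.mul_one]

end SchreierData

/-- two Schreier loops `L(Θ,f)` and `L(Θ',f')` on `K × G` are equivalent —
i.e. there is a loop `L` which is an extension of `G` by `K` (with `G` embedded via `j`
as the kernel of a surjective loop homomorphism `π : L → Q` onto the factor loop) such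
that both are Schreier decompositions of `L` with respect to `G` with the same underlying
isomorphism `κ : K → L/G` — iff there is a function `n : K → G` with `n(ε) = e` such that
`Θ'_σ = ι_{n(σ)}⁻¹ ∘ Θ_σ` and `f'(σ,τ) = n(στ)⁻¹·f(σ,τ)·Θ_τ(n(σ))·n(τ)`. -/
theorem schreier_stmt19 {K G : Type u} [MLoop K] [Group G]
    (D D' : SchreierData K G) :
    (∃ (L : Type u) (iL : MLoop L) (j : G → L) (Q : Type u) (iQ : MLoop Q)
        (π : L → Q) (κ : K → Q) (F F' : K × G → L),
      Function.Injective j ∧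
      (∀ s t : G, j (s * t) = iL.toMul.mul (j s) (j t)) ∧
      (∀ x y : L, π (iL.toMul.mul x y) = iQ.toMul.mul (π x) (π y)) ∧
      Function.Surjective π ∧
      {x : L | π x = iQ.toOne.one} = Set.range j ∧
      Function.Bijective κ ∧
      (∀ a b : K, κ (a * b) = iQ.toMul.mul (κ a) (κ b)) ∧
      Function.Bijective F ∧
      (∀ p q : K × G, F (D.mul p q) = iL.toMul.mul (F p) (F q)) ∧
      (∀ t : G, F (1, t) = j t) ∧
      Function.Bijective F' ∧
      (∀ p q : K × G, F' (D'.mul p q) = iL.toMul.mul (F' p) (F' q)) ∧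
      (∀ t : G, F' (1, t) = j t) ∧
      (∀ σ : K, π (F (σ, 1)) = κ σ) ∧
      (∀ σ : K, π (F' (σ, 1)) = κ σ)) ↔
    (∃ n : K → G, n 1 = 1 ∧
      (∀ (σ : K) (g : G), D'.Θ σ g = (n σ)⁻¹ * D.Θ σ g * n σ) ∧
      (∀ σ τ : K, D'.f σ τ = (n (σ * τ))⁻¹ * D.f σ τ * D.Θ τ (n σ) * n τ)) := by
  constructor
  · rintro ⟨L, iL, j, Q, iQ, π, κ, F, F', hj, hjmul, hπmul, hπsurj, hker, hκbij, hκmul,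
      hFbij, hFmul, hF1, hF'bij, hF'mul, hF'1, hπF, hπF'⟩
    have hπj : ∀ g : G, π (j g) = iQ.toOne.one := by
      intro g
      exact (Set.ext_iff.1 hker (j g)).2 ⟨g, rfl⟩
    have hone : ((1 : K), (1 : G)) = ((1 : K × G).1, (1 : G)) := rfl
    have hπF2 : ∀ (σ : K) (g : G), π (F (σ, g)) = κ σ := by
      intro σ g
      have h1 : ((σ, g) : K × G) = D.mul (σ, 1) (1, g) := by
        rw [D.mul_one_left, one_mul]
      rw [h1, hFmul, hπmul, hF1, hπj g, hπF σ]
      exact iQ.mul_one (κ σ)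
    have hπF'2 : ∀ (σ : K) (g : G), π (F' (σ, g)) = κ σ := by
      intro σ g
      have h1 : ((σ, g) : K × G) = D'.mul (σ, 1) (1, g) := by
        rw [D'.mul_one_left, one_mul]
      rw [h1, hF'mul, hπmul, hF'1, hπj g, hπF' σ]
      exact iQ.mul_one (κ σ)
    set e := Equiv.ofBijective F hFbij with he
    set Φ : K × G → K × G := fun p => e.symm (F' p) with hΦdef
    have hFΦ : ∀ p : K × G, F (Φ p) = F' p := fun p => e.apply_symm_apply (F' p)
    have hΦfst : ∀ (σ : K) (g : G), (Φ (σ, g)).1 = σ := by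
      intro σ g
      apply hκbij.1
      have h1 : π (F ((Φ (σ, g)).1, (Φ (σ, g)).2)) = κ (Φ (σ, g)).1 := hπF2 _ _
      have h2 : π (F (Φ (σ, g))) = κ (Φ (σ, g)).1 := h1
      rw [hFΦ, hπF'2] at h2
      exact h2.symm
    set n : K → G := fun σ => (Φ (σ, 1)).2 with hn
    have hΦ1 : ∀ σ : K, Φ (σ, 1) = (σ, n σ) := fun σ => Prod.ext (hΦfst σ 1) rfl
    have hΦ1g : ∀ g : G, Φ ((1 : K), g) = (1, g) := by
      intro g
      apply hFbij.1
      rw [hFΦ, hF'1, hF1]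
    have hΦhom : ∀ p q : K × G, Φ (D'.mul p q) = D.mul (Φ p) (Φ q) := by
      intro p q
      apply hFbij.1
      rw [hFΦ, hF'mul, ← hFΦ p, ← hFΦ q, hFmul]
    have hΦ : ∀ (σ : K) (g : G), Φ (σ, g) = (σ, n σ * g) := by
      intro σ g
      have h1 : ((σ, g) : K × G) = D'.mul (σ, 1) (1, g) := by
        rw [D'.mul_one_left, one_mul]
      rw [h1, hΦhom, hΦ1, hΦ1g, D.mul_one_left]
    have hn1 : n 1 = 1 := by
      have h1 := hΦ1 1
      rw [hΦ1g 1] at h1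
      exact (congrArg Prod.snd h1).symm
    have key : ∀ (τ σ : K) (t s : G),
        n (τ * σ) * (D'.f τ σ * D'.Θ σ t * s)
          = D.f τ σ * D.Θ σ (n τ * t) * (n σ * s) := by
      intro τ σ t s
      have h := hΦhom (τ, t) (σ, s)
      rw [show D'.mul (τ, t) (σ, s) = (τ * σ, D'.f τ σ * D'.Θ σ t * s) from rfl,
        hΦ, hΦ, hΦ] at h
      exact congrArg Prod.snd h
    refine ⟨n, hn1, ?_, ?_⟩
    · intro σ g
      have h := key 1 σ g 1
      simp only [MLoop.one_mul, D.f_one_left, D'.f_one_left, hn1, one_mul, mul_one] at h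
      have h2 : (D.Θ σ) g * n σ = n σ * ((n σ)⁻¹ * D.Θ σ g * n σ) := by group
      exact mul_left_cancel (h.trans h2)
    · intro σ τ
      have h := key σ τ 1 1
      simp only [map_one, mul_one] at h
      have h2 : n (σ * τ) * ((n (σ * τ))⁻¹ * D.f σ τ * D.Θ τ (n σ) * n τ)
          = D.f σ τ * D.Θ τ (n σ) * n τ := by group
      exact mul_left_cancel (h.trans h2.symm)
  · rintro ⟨n, hn1, hnΘ, hnf⟩
    refine ⟨K × G, D.loop, fun t => (1, t), K, inferInstance, Prod.fst, id, id,
      fun p => (p.1, n p.1 * p.2), ?_, ?_, ?_, ?_, ?_, ?_, ?_, ?_, ?_, ?_, ?_, ?_, ?_, ?_, ?_⟩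
    · intro s t h
      exact congrArg Prod.snd h
    · intro s t
      show ((1 : K), s * t) = D.mul (1, s) (1, t)
      rw [D.mul_one_left]
    · intro x y
      rfl
    · intro x
      exact ⟨(x, 1), rfl⟩
    · ext ⟨a, b⟩
      simp only [Set.mem_setOf_eq, Set.mem_range, Prod.mk.injEq]
      constructor
      · intro h
        exact ⟨b, h.symm, rfl⟩
      · rintro ⟨t, h1, h2⟩
        exact h1.symm
    · exact Function.bijective_id
    · intro a b
      rfl
    · exact Function.bijective_id
    · intro p q
      rfl
    · intro t
      rfl
    · constructor
      · rintro ⟨a, s⟩ ⟨b, u⟩ h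
        have h1 : a = b := congrArg Prod.fst h
        subst h1
        have h2 : n a * s = n a * u := congrArg Prod.snd h
        exact Prod.ext rfl (mul_left_cancel h2)
      · rintro ⟨x, y⟩
        exact ⟨(x, (n x)⁻¹ * y), Prod.ext rfl (by group)⟩
    · rintro ⟨τ, t⟩ ⟨σ, s⟩
      show ((τ * σ : K), n (τ * σ) * (D'.f τ σ * D'.Θ σ t * s))
        = D.mul (τ, n τ * t) (σ, n σ * s)
      refine Prod.ext rfl ?_
      show n (τ * σ) * (D'.f τ σ * D'.Θ σ t * s)
        = D.f τ σ * D.Θ σ (n τ * t) * (n σ * s)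
      rw [hnf τ σ, hnΘ σ t, map_mul]
      group
    · intro t
      show ((1 : K), n 1 * t) = (1, t)
      rw [hn1, one_mul]
    · intro σ
      rfl
    · intro σ
      rfl
end
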